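/- arXiv:1508.04508 — 12 statements merged into one kernel-verified Lean document; each statement's English description precedes it below -/
import Mathlib

section
/- Let n ≥ 1, let F be the (2n+1)×(2n+1) matrix with F_{i,j} = 1 if i+j = 2n+2 and 0 otherwise, and define so(2n+1,ℂ) = {X ∈ M_{2n+1}(ℂ) : XᵀF + FX = 0}. Let Λ = Σ_{i=1}^{n} E_{i,i+1} − Σ_{i=n+1}^{2n} E_{i,i+1}. Then Λ ∈ so(2n+1,ℂ), and the centralizer {X ∈ so(2n+1,ℂ) : Λ·X = X·Λ} equals the ℂ-linear span of the odd powers Λ^{2k−1} for 1 ≤ k ≤ n; in particular it is n-dimensional. -/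
open Matrix

namespace So21

noncomputable def c (n i : ℕ) : ℂ := if i < n then 1 else -1

lemma c_ne_zero (n i : ℕ) : c n i ≠ 0 := by
  unfold c; split <;> simp

noncomputable def P (n i d : ℕ) : ℂ := ∏ t ∈ Finset.range d, c n (i + t)

lemma P_ne_zero (n i d : ℕ) : P n i d ≠ 0 :=
  Finset.prod_ne_zero_iff.2 fun _ _ => c_ne_zero _ _

variable {n : ℕ} {F Λ : Matrix (Fin (2*n+1)) (Fin (2*n+1)) ℂ}

/-- entry form of Λ with c -/
lemma lam_apply (hΛ : ∀ i j : Fin (2*n+1),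
      Λ i j = if (j : ℕ) = (i : ℕ) + 1 then (if (i : ℕ) < n then 1 else -1) else 0)
    (i j : Fin (2*n+1)) :
    Λ i j = if (j : ℕ) = (i : ℕ) + 1 then c n i else 0 := by
  rw [hΛ]; rfl

lemma mul_left_apply (hΛ : ∀ i j : Fin (2*n+1),
      Λ i j = if (j : ℕ) = (i : ℕ) + 1 then (if (i : ℕ) < n then 1 else -1) else 0)
    (X : Matrix (Fin (2*n+1)) (Fin (2*n+1)) ℂ) (i j : Fin (2*n+1)) :
    (Λ * X) i j = if h : (i : ℕ) + 1 < 2*n+1 then c n i * X ⟨(i:ℕ)+1, h⟩ j else 0 := by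
  rw [Matrix.mul_apply]
  split
  · rename_i h
    rw [Finset.sum_eq_single (⟨(i:ℕ)+1, h⟩ : Fin (2*n+1))]
    · rw [lam_apply hΛ]; simp
    · intro b _ hb
      rw [lam_apply hΛ]
      rw [if_neg, zero_mul]
      intro hc; exact hb (Fin.ext hc)
    · simp
  · rename_i h
    apply Finset.sum_eq_zero
    intro k _
    rw [lam_apply hΛ, if_neg, zero_mul]
    intro hc; omega

lemma mul_right_apply (hΛ : ∀ i j : Fin (2*n+1),
      Λ i j = if (j : ℕ) = (i : ℕ) + 1 then (if (i : ℕ) < n then 1 else -1) else 0)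
    (X : Matrix (Fin (2*n+1)) (Fin (2*n+1)) ℂ) (i j : Fin (2*n+1)) :
    (X * Λ) i j = if (j : ℕ) = 0 then 0
      else X i ⟨(j:ℕ)-1, by omega⟩ * c n ((j:ℕ)-1) := by
  rw [Matrix.mul_apply]
  split
  · rename_i h
    apply Finset.sum_eq_zero
    intro k _
    rw [lam_apply hΛ, if_neg, mul_zero]
    omega
  · rename_i h
    rw [Finset.sum_eq_single (⟨(j:ℕ)-1, by omega⟩ : Fin (2*n+1))]
    · rw [lam_apply hΛ, if_pos (by simp; omega)]
    · intro b _ hb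
      rw [lam_apply hΛ, if_neg, mul_zero]
      intro hc; exact hb (Fin.ext (by simp; omega))
    · simp

lemma pow_apply (hΛ : ∀ i j : Fin (2*n+1),
      Λ i j = if (j : ℕ) = (i : ℕ) + 1 then (if (i : ℕ) < n then 1 else -1) else 0)
    (d : ℕ) (i j : Fin (2*n+1)) :
    (Λ ^ d) i j = if (j : ℕ) = (i : ℕ) + d then P n i d else 0 := by
  induction d generalizing i with
  | zero =>
    simp only [pow_zero, Matrix.one_apply, P, Finset.range_zero, Finset.prod_empty, add_zero]
    congr 1
    simp [Fin.ext_iff, eq_comm]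
  | succ d ih =>
    rw [pow_succ', mul_left_apply hΛ]
    split
    · rename_i h
      rw [ih]
      by_cases hc : (j:ℕ) = (i:ℕ) + 1 + d
      · rw [if_pos hc, if_pos (by omega)]
        unfold P
        rw [Finset.prod_range_succ']
        simp only [add_zero]
        rw [mul_comm]
        congr 1
        apply Finset.prod_congr rfl
        intro t _
        congr 1
        omega
      · rw [if_neg hc, mul_zero, if_neg (by omega)]
    · rename_i h
      rw [if_neg]
      omega

lemma transpose_mulF (hF : ∀ i j : Fin (2*n+1), F i j = if (i : ℕ) + (j : ℕ) = 2*n then 1 else 0)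
    (X : Matrix (Fin (2*n+1)) (Fin (2*n+1)) ℂ) (i j : Fin (2*n+1)) :
    (Xᵀ * F) i j = X ⟨2*n - (j:ℕ), by omega⟩ i := by
  rw [Matrix.mul_apply]
  rw [Finset.sum_eq_single (⟨2*n - (j:ℕ), by omega⟩ : Fin (2*n+1))]
  · rw [Matrix.transpose_apply, hF, if_pos (by simp; omega), mul_one]
  · intro b _ hb
    rw [hF, if_neg, mul_zero]
    intro hc; exact hb (Fin.ext (by simp; omega))
  · simp

lemma F_mul (hF : ∀ i j : Fin (2*n+1), F i j = if (i : ℕ) + (j : ℕ) = 2*n then 1 else 0)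
    (X : Matrix (Fin (2*n+1)) (Fin (2*n+1)) ℂ) (i j : Fin (2*n+1)) :
    (F * X) i j = X ⟨2*n - (i:ℕ), by omega⟩ j := by
  rw [Matrix.mul_apply]
  rw [Finset.sum_eq_single (⟨2*n - (i:ℕ), by omega⟩ : Fin (2*n+1))]
  · rw [hF, if_pos (by simp; omega), one_mul]
  · intro b _ hb
    rw [hF, if_neg, zero_mul]
    intro hc; exact hb (Fin.ext (by simp; omega))
  · simp

lemma part1 (hF : ∀ i j : Fin (2*n+1), F i j = if (i : ℕ) + (j : ℕ) = 2*n then 1 else 0)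
    (hΛ : ∀ i j : Fin (2*n+1),
      Λ i j = if (j : ℕ) = (i : ℕ) + 1 then (if (i : ℕ) < n then 1 else -1) else 0) :
    Λᵀ * F + F * Λ = 0 := by
  ext i j
  rw [Matrix.add_apply, transpose_mulF hF, F_mul hF, lam_apply hΛ, lam_apply hΛ,
    Matrix.zero_apply]
  simp only []
  by_cases hij : (i:ℕ) + (j:ℕ) = 2*n+1
  · rw [if_pos (by omega), if_pos (by omega)]
    unfold c
    have hi : 1 ≤ (i:ℕ) := by omega
    have hj : 1 ≤ (j:ℕ) := by omega
    split_ifs <;> [omega; ring; ring; omega]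
  · rw [if_neg (by omega), if_neg (by omega)]
    ring

lemma pow_transpose_mulF
    (hF : ∀ i j : Fin (2*n+1), F i j = if (i : ℕ) + (j : ℕ) = 2*n then 1 else 0)
    (hΛ : ∀ i j : Fin (2*n+1),
      Λ i j = if (j : ℕ) = (i : ℕ) + 1 then (if (i : ℕ) < n then 1 else -1) else 0)
    (d : ℕ) : (Λ ^ d)ᵀ * F = ((-1 : ℂ) ^ d) • (F * (Λ ^ d)) := by
  have h1 : Λᵀ * F = -(F * Λ) := by
    have := part1 hF hΛ
    linear_combination (norm := module) this
  induction d with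
  | zero => simp
  | succ d ih =>
    rw [pow_succ', Matrix.transpose_mul, Matrix.mul_assoc, h1]
    rw [Matrix.mul_neg, ← Matrix.mul_assoc, ih, pow_succ, Matrix.smul_mul,
      Matrix.mul_assoc]
    rw [← pow_succ, ← pow_succ']
    module

lemma eq_zero_of_firstRow
    (hΛ : ∀ i j : Fin (2*n+1),
      Λ i j = if (j : ℕ) = (i : ℕ) + 1 then (if (i : ℕ) < n then 1 else -1) else 0)
    (X : Matrix (Fin (2*n+1)) (Fin (2*n+1)) ℂ)
    (hcomm : Λ * X = X * Λ) (h0 : ∀ j, X 0 j = 0) : X = 0 := by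
  have key : ∀ m : ℕ, ∀ i : Fin (2*n+1), (i : ℕ) = m → ∀ j, X i j = 0 := by
    intro m
    induction m with
    | zero =>
      intro i hi j
      have : i = 0 := Fin.ext (by simpa using hi)
      rw [this]; exact h0 j
    | succ m ih =>
      intro i hi j
      have hm : m + 1 < 2*n+1 := by omega
      have hi' : i = ⟨m+1, hm⟩ := Fin.ext (by simpa using hi)
      have hme := congrFun (congrFun hcomm ⟨m, by omega⟩) j
      rw [mul_left_apply hΛ, mul_right_apply hΛ] at hme
      rw [dif_pos hm] at hme
      by_cases hj : (j:ℕ) = 0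
      · rw [if_pos hj] at hme
        have := mul_eq_zero.1 hme
        rcases this with h | h
        · exact absurd h (c_ne_zero n m)
        · rw [hi']; exact h
      · rw [if_neg hj] at hme
        have hz : X ⟨m, by omega⟩ ⟨(j:ℕ)-1, by omega⟩ = 0 := ih _ rfl _
        rw [hz, zero_mul] at hme
        rcases mul_eq_zero.1 hme with h | h
        · exact absurd h (c_ne_zero n m)
        · rw [hi']; exact h
  ext i j
  rw [Matrix.zero_apply]
  exact key (i:ℕ) i rfl j

lemma repr_of_comm
    (hΛ : ∀ i j : Fin (2*n+1),
      Λ i j = if (j : ℕ) = (i : ℕ) + 1 then (if (i : ℕ) < n then 1 else -1) else 0)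
    (X : Matrix (Fin (2*n+1)) (Fin (2*n+1)) ℂ) (hcomm : Λ * X = X * Λ) :
    X = ∑ d : Fin (2*n+1), (X 0 d / P n 0 (d : ℕ)) • Λ ^ (d : ℕ) := by
  set S := ∑ d : Fin (2*n+1), (X 0 d / P n 0 (d : ℕ)) • Λ ^ (d : ℕ) with hS
  have hScomm : Λ * S = S * Λ := by
    rw [hS, Finset.mul_sum, Finset.sum_mul]
    apply Finset.sum_congr rfl
    intro d _
    rw [Matrix.mul_smul, Matrix.smul_mul, ← pow_succ, ← pow_succ']
  have hrow : ∀ j, (X - S) 0 j = 0 := by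
    intro j
    rw [Matrix.sub_apply, hS, Matrix.sum_apply]
    have : ∀ d : Fin (2*n+1),
        ((X 0 d / P n 0 (d:ℕ)) • Λ ^ (d:ℕ)) 0 j
          = if d = j then X 0 j else 0 := by
      intro d
      rw [Matrix.smul_apply, pow_apply hΛ, smul_eq_mul]
      simp only [Fin.val_zero, zero_add]
      by_cases hd : d = j
      · subst hd
        rw [if_pos rfl, if_pos rfl, div_mul_cancel₀ _ (P_ne_zero n 0 _)]
      · rw [if_neg, mul_zero, if_neg hd]
        intro hc; exact hd (Fin.ext hc.symm)
    rw [Finset.sum_congr rfl fun d _ => this d, Finset.sum_ite_eq' Finset.univ j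
      (fun _ => X 0 j)]
    simp
  have := eq_zero_of_firstRow hΛ (X - S)
    (by rw [Matrix.mul_sub, Matrix.sub_mul, hcomm, hScomm]) hrow
  have := sub_eq_zero.mp this
  exact this

lemma even_coeff_zero
    (hF : ∀ i j : Fin (2*n+1), F i j = if (i : ℕ) + (j : ℕ) = 2*n then 1 else 0)
    (hΛ : ∀ i j : Fin (2*n+1),
      Λ i j = if (j : ℕ) = (i : ℕ) + 1 then (if (i : ℕ) < n then 1 else -1) else 0)
    (X : Matrix (Fin (2*n+1)) (Fin (2*n+1)) ℂ)
    (hcomm : Λ * X = X * Λ) (hso : Xᵀ * F + F * X = 0)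
    (e : Fin (2*n+1)) (he : Even (e : ℕ)) : X 0 e / P n 0 (e : ℕ) = 0 := by
  have hX := repr_of_comm hΛ X hcomm
  set a : Fin (2*n+1) → ℂ := fun d => X 0 d / P n 0 (d : ℕ) with ha
  rw [hX] at hso
  have h2 : (∑ d : Fin (2*n+1), a d • Λ ^ (d:ℕ))ᵀ * F
      + F * (∑ d : Fin (2*n+1), a d • Λ ^ (d:ℕ))
      = ∑ d : Fin (2*n+1), (a d * ((-1 : ℂ) ^ (d:ℕ) + 1)) • (F * Λ ^ (d:ℕ)) := by
    rw [Matrix.transpose_sum, Finset.sum_mul, Finset.mul_sum, ← Finset.sum_add_distrib]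
    apply Finset.sum_congr rfl
    intro d _
    rw [Matrix.transpose_smul, Matrix.smul_mul, pow_transpose_mulF hF hΛ,
      Matrix.mul_smul]
    module
  rw [h2] at hso
  have i0 : Fin (2*n+1) := ⟨2*n, by omega⟩
  have key := congrFun (congrFun hso ⟨2*n, by omega⟩) e
  rw [Matrix.sum_apply] at key
  have hterm : ∀ d : Fin (2*n+1),
      ((a d * ((-1 : ℂ) ^ (d:ℕ) + 1)) • (F * Λ ^ (d:ℕ))) ⟨2*n, by omega⟩ e
        = if d = e then a e * ((-1 : ℂ) ^ (e:ℕ) + 1) * P n 0 (e:ℕ) else 0 := by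
    intro d
    rw [Matrix.smul_apply, F_mul hF, smul_eq_mul]
    have h0 : (⟨2*n - ((⟨2*n, by omega⟩ : Fin (2*n+1)) : ℕ), by omega⟩ : Fin (2*n+1)) = 0 :=
      Fin.ext (by simp)
    rw [h0, pow_apply hΛ]
    simp only [Fin.val_zero, zero_add]
    by_cases hd : d = e
    · subst hd; rw [if_pos rfl, if_pos rfl]
    · rw [if_neg (fun hc => hd (Fin.ext hc.symm)), mul_zero, if_neg hd]
  rw [Finset.sum_congr rfl fun d _ => hterm d, Finset.sum_ite_eq' Finset.univ e] at key
  simp only [Finset.mem_univ, if_true, Matrix.zero_apply] at key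
  have hpow : ((-1 : ℂ) ^ (e:ℕ) + 1) = 2 := by rw [he.neg_one_pow]; norm_num
  rw [hpow] at key
  rcases mul_eq_zero.1 key with h | h
  · rcases mul_eq_zero.1 h with h' | h'
    · exact h'
    · norm_num at h'
  · exact absurd h (P_ne_zero n 0 _)

lemma span_mem_props
    (hF : ∀ i j : Fin (2*n+1), F i j = if (i : ℕ) + (j : ℕ) = 2*n then 1 else 0)
    (hΛ : ∀ i j : Fin (2*n+1),
      Λ i j = if (j : ℕ) = (i : ℕ) + 1 then (if (i : ℕ) < n then 1 else -1) else 0)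
    (X : Matrix (Fin (2*n+1)) (Fin (2*n+1)) ℂ)
    (hX : X ∈ Submodule.span ℂ (Set.range fun k : Fin n => Λ ^ (2*(k : ℕ) + 1))) :
    Xᵀ * F + F * X = 0 ∧ Λ * X = X * Λ := by
  induction hX using Submodule.span_induction with
  | mem x hx =>
    obtain ⟨k, rfl⟩ := hx
    constructor
    · rw [pow_transpose_mulF hF hΛ, Odd.neg_one_pow ⟨(k:ℕ), by ring⟩]
      module
    · rw [← pow_succ, ← pow_succ']
  | zero => simp
  | add x y _ _ hx hy =>
    refine ⟨?_, ?_⟩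
    · have := congrArg₂ (· + ·) hx.1 hy.1
      simp only [add_zero] at this
      rw [← this, Matrix.transpose_add]
      noncomm_ring
    · rw [Matrix.mul_add, Matrix.add_mul, hx.2, hy.2]
  | smul c x _ hx =>
    refine ⟨?_, ?_⟩
    · rw [Matrix.transpose_smul, Matrix.smul_mul, Matrix.mul_smul, ← smul_add, hx.1,
        smul_zero]
    · rw [Matrix.mul_smul, Matrix.smul_mul, hx.2]

lemma lin_indep
    (hΛ : ∀ i j : Fin (2*n+1),
      Λ i j = if (j : ℕ) = (i : ℕ) + 1 then (if (i : ℕ) < n then 1 else -1) else 0) :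
    LinearIndependent ℂ (fun k : Fin n => Λ ^ (2*(k : ℕ) + 1)) := by
  rw [Fintype.linearIndependent_iff]
  intro g hg k
  have key := congrFun (congrFun hg 0) ⟨2*(k:ℕ)+1, by omega⟩
  rw [Matrix.sum_apply, Matrix.zero_apply] at key
  have hterm : ∀ i : Fin n,
      (g i • Λ ^ (2*(i:ℕ)+1)) 0 (⟨2*(k:ℕ)+1, by omega⟩ : Fin (2*n+1))
        = if i = k then g k * P n 0 (2*(k:ℕ)+1) else 0 := by
    intro i
    rw [Matrix.smul_apply, pow_apply hΛ, smul_eq_mul]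
    simp only [Fin.val_zero, zero_add, Fin.val_mk]
    by_cases hi : i = k
    · subst hi; rw [if_pos rfl, if_pos rfl]
    · rw [if_neg (by intro hc; exact hi (Fin.ext (by omega))), mul_zero, if_neg hi]
  rw [Finset.sum_congr rfl fun i _ => hterm i, Finset.sum_ite_eq' Finset.univ k] at key
  simp only [Finset.mem_univ, if_true] at key
  rcases mul_eq_zero.1 key with h | h
  · exact h
  · exact absurd h (P_ne_zero n 0 _)

end So21

/-- The centralizer of the regular nilpotent element
`Λ = Σ_{i=1}^n E_{i,i+1} − Σ_{i=n+1}^{2n} E_{i,i+1}` in `so(2n+1, ℂ)` (defined by the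
antidiagonal form `F`) is the span of the odd powers `Λ^{2k−1}`, `1 ≤ k ≤ n`,
which is `n`-dimensional. -/
theorem stmt_1 (n : ℕ) (hn : 1 ≤ n)
    (F Λ : Matrix (Fin (2*n+1)) (Fin (2*n+1)) ℂ)
    (hF : ∀ i j : Fin (2*n+1), F i j = if (i : ℕ) + (j : ℕ) = 2*n then 1 else 0)
    (hΛ : ∀ i j : Fin (2*n+1),
      Λ i j = if (j : ℕ) = (i : ℕ) + 1 then (if (i : ℕ) < n then 1 else -1) else 0) :
    (Λᵀ * F + F * Λ = 0)
    ∧ {X : Matrix (Fin (2*n+1)) (Fin (2*n+1)) ℂ | Xᵀ * F + F * X = 0 ∧ Λ * X = X * Λ}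
        = (Submodule.span ℂ (Set.range fun k : Fin n => Λ ^ (2*(k : ℕ) + 1)) :
            Set (Matrix (Fin (2*n+1)) (Fin (2*n+1)) ℂ))
    ∧ Module.finrank ℂ
        (Submodule.span ℂ (Set.range fun k : Fin n => Λ ^ (2*(k : ℕ) + 1))) = n := by

  refine ⟨So21.part1 hF hΛ, ?_, ?_⟩
  · ext X
    simp only [Set.mem_setOf_eq, SetLike.mem_coe]
    constructor
    · rintro ⟨hso, hcomm⟩
      rw [So21.repr_of_comm hΛ X hcomm]
      apply Submodule.sum_mem
      intro d _
      by_cases hd : Even (d : ℕ)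
      · rw [So21.even_coeff_zero hF hΛ X hcomm hso d hd, zero_smul]
        exact Submodule.zero_mem _
      · obtain ⟨k, hk⟩ := Nat.not_even_iff_odd.1 hd
        have hkn : k < n := by have := d.isLt; omega
        apply Submodule.smul_mem
        apply Submodule.subset_span
        exact ⟨⟨k, hkn⟩, by show Λ ^ (2*k+1) = Λ ^ (d:ℕ); rw [hk]⟩
    · intro h; exact So21.span_mem_props hF hΛ X h
  · rw [finrank_span_eq_card (So21.lin_indep hΛ)]
    simp
end

section
/- Let n ≥ 1, let F be the 2n×2n matrix with F_{i,2n+1−i} = 1 for 1 ≤ i ≤ n, F_{i,2n+1−i} = −1 for n+1 ≤ i ≤ 2n, and all other entries 0, and define sp(2n,ℂ) = {X ∈ M_{2n}(ℂ) : XᵀF + FX = 0}. Let Λ = Σ_{i=1}^{n} E_{i,i+1} − Σ_{i=n+1}^{2n−1} E_{i,i+1}. Then Λ ∈ sp(2n,ℂ), and the centralizer {X ∈ sp(2n,ℂ) : Λ·X = X·Λ} equals the ℂ-linear span of the odd powers Λ^{2k−1} for 1 ≤ k ≤ n; in particular it is n-dimensional. -/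
open Matrix Finset

namespace Stmt2Aux


noncomputable def ee (n t : ℕ) : ℂ := if t < n then 1 else -1

lemma ee_ne (n t : ℕ) : ee n t ≠ 0 := by
  unfold ee; split <;> simp

lemma ee_sq (n t : ℕ) : ee n t * ee n t = 1 := by
  unfold ee; split <;> ring

lemma ee_flip {n t : ℕ} (h : t < 2*n) : ee n (2*n - 1 - t) = - ee n t := by
  rcases lt_or_ge t n with h1 | h1
  · have h2 : ¬ (2*n - 1 - t < n) := by omega
    simp [ee, h1, h2]
  · have h2 : 2*n - 1 - t < n := by omega
    rw [ee, ee, if_pos h2, if_neg (by omega)]; ring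

noncomputable def pp (n i p : ℕ) : ℂ := ∏ t ∈ Finset.range p, ee n (i + t)

lemma pp_ne (n i p : ℕ) : pp n i p ≠ 0 :=
  Finset.prod_ne_zero_iff.2 fun t _ => ee_ne n (i + t)

lemma sum_ite_nat {m : ℕ} (f : Fin m → ℂ) (a : ℕ) :
    (∑ k : Fin m, if (k:ℕ) = a then f k else 0) = if h : a < m then f ⟨a, h⟩ else 0 := by
  split
  · next h =>
      have e1 : (∑ k : Fin m, if (k:ℕ) = a then f k else 0)
           = ∑ k : Fin m, if k = (⟨a,h⟩ : Fin m) then f k else 0 := by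
        refine Finset.sum_congr rfl fun k _ => ?_
        simp [Fin.ext_iff]
      rw [e1, Finset.sum_ite_eq' Finset.univ, if_pos (Finset.mem_univ _)]
  · next h =>
      exact Finset.sum_eq_zero fun k _ => if_neg (by have := k.isLt; omega)


variable {n : ℕ} {Λ F : Matrix (Fin (2*n)) (Fin (2*n)) ℂ}

def fl (i : Fin (2*n)) : Fin (2*n) := ⟨2*n-1-(i:ℕ), by have := i.isLt; omega⟩

lemma pow_entry (hΛ : ∀ i j, Λ i j = if (j:ℕ) = (i:ℕ)+1 then ee n i else 0)
    (p : ℕ) (i j : Fin (2*n)) :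
    (Λ^p) i j = if (j:ℕ) = (i:ℕ) + p then pp n i p else 0 := by
  induction p generalizing j with
  | zero =>
    rw [pow_zero, one_apply]
    by_cases hij : (j:ℕ) = (i:ℕ)
    · rw [if_pos (show i = j from Fin.ext hij.symm), if_pos (by omega)]
      simp [pp]
    · rw [if_neg (fun hh => hij (congrArg Fin.val hh.symm)), if_neg (by omega)]
  | succ p ih =>
    rw [pow_succ, mul_apply]
    have e1 : (∑ k, (Λ^p) i k * Λ k j)
        = ∑ k : Fin (2*n), if (k:ℕ) = (i:ℕ)+p
            then (pp n i p * (if (j:ℕ)=(k:ℕ)+1 then ee n k else 0)) else 0 := by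
      refine Finset.sum_congr rfl fun k _ => ?_
      rw [ih, hΛ, ite_mul, zero_mul]
    rw [e1, sum_ite_nat]
    split
    · next h =>
      by_cases hj : (j:ℕ) = (i:ℕ)+(p+1)
      · rw [if_pos (show (j:ℕ) = (i:ℕ)+p+1 by omega), if_pos hj]
        rw [pp, pp, Finset.prod_range_succ]
      · rw [if_neg (show ¬ (j:ℕ) = (i:ℕ)+p+1 by omega), mul_zero, if_neg hj]
    · next h =>
      rw [if_neg (by have := j.isLt; omega)]

lemma FX_entry (hF : ∀ i j, F i j = if (i:ℕ)+(j:ℕ)+2 = 2*n+1 then ee n i else 0)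
    (X : Matrix (Fin (2*n)) (Fin (2*n)) ℂ) (i j : Fin (2*n)) :
    (F * X) i j = ee n i * X (fl i) j := by
  have hi := i.isLt
  rw [mul_apply]
  have e1 : (∑ k, F i k * X k j)
      = ∑ k : Fin (2*n), if (k:ℕ) = 2*n-1-(i:ℕ) then ee n i * X k j else 0 := by
    refine Finset.sum_congr rfl fun k _ => ?_
    have hk := k.isLt
    rw [hF]
    by_cases h : (k:ℕ) = 2*n-1-(i:ℕ)
    · rw [if_pos (by omega), if_pos h]
    · rw [if_neg (by omega), if_neg h, zero_mul]
  rw [e1, sum_ite_nat, dif_pos (show 2*n-1-(i:ℕ) < 2*n by omega)]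
  rfl

lemma XF_entry (hF : ∀ i j, F i j = if (i:ℕ)+(j:ℕ)+2 = 2*n+1 then ee n i else 0)
    (X : Matrix (Fin (2*n)) (Fin (2*n)) ℂ) (i j : Fin (2*n)) :
    (Xᵀ * F) i j = X (fl j) i * ee n (2*n-1-(j:ℕ)) := by
  have hj := j.isLt
  rw [mul_apply]
  have e1 : (∑ k, Xᵀ i k * F k j)
      = ∑ k : Fin (2*n), if (k:ℕ) = 2*n-1-(j:ℕ) then X k i * ee n k else 0 := by
    refine Finset.sum_congr rfl fun k _ => ?_
    have hk := k.isLt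
    rw [transpose_apply, hF]
    by_cases h : (k:ℕ) = 2*n-1-(j:ℕ)
    · rw [if_pos (by omega), if_pos h]
    · rw [if_neg (by omega), if_neg h, mul_zero]
  rw [e1, sum_ite_nat, dif_pos (show 2*n-1-(j:ℕ) < 2*n by omega)]
  rfl

lemma mulL_entry (hΛ : ∀ i j, Λ i j = if (j:ℕ) = (i:ℕ)+1 then ee n i else 0)
    (X : Matrix (Fin (2*n)) (Fin (2*n)) ℂ) (i j : Fin (2*n)) :
    (Λ * X) i j = if h : (i:ℕ)+1 < 2*n then ee n i * X ⟨(i:ℕ)+1,h⟩ j else 0 := by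
  rw [mul_apply]
  have e1 : (∑ k, Λ i k * X k j)
      = ∑ k : Fin (2*n), if (k:ℕ) = (i:ℕ)+1 then ee n i * X k j else 0 := by
    refine Finset.sum_congr rfl fun k _ => ?_
    rw [hΛ, ite_mul, zero_mul]
  rw [e1, sum_ite_nat]

lemma mulR_entry (hΛ : ∀ i j, Λ i j = if (j:ℕ) = (i:ℕ)+1 then ee n i else 0)
    (X : Matrix (Fin (2*n)) (Fin (2*n)) ℂ) (i j : Fin (2*n)) :
    (X * Λ) i j = if h : 1 ≤ (j:ℕ)
      then X i ⟨(j:ℕ)-1, by have := j.isLt; omega⟩ * ee n ((j:ℕ)-1) else 0 := by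
  rw [mul_apply]
  by_cases hj : 1 ≤ (j:ℕ)
  · have e1 : (∑ k, X i k * Λ k j)
        = ∑ k : Fin (2*n), if (k:ℕ) = (j:ℕ)-1 then X i k * ee n k else 0 := by
      refine Finset.sum_congr rfl fun k _ => ?_
      rw [hΛ]
      by_cases h : (k:ℕ) = (j:ℕ)-1
      · rw [if_pos (by omega), if_pos h]
      · rw [if_neg (by omega), if_neg h, mul_zero]
    rw [e1, sum_ite_nat, dif_pos (show (j:ℕ)-1 < 2*n by have := j.isLt; omega), dif_pos hj]
  · rw [dif_neg hj]
    refine Finset.sum_eq_zero fun k _ => ?_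
    rw [hΛ, if_neg (by omega), mul_zero]

lemma pp_flip {n i p : ℕ} (hpi : p ≤ i) (him : i < 2*n) :
    pp n (2*n-1-i) p = (-1)^p * pp n (i-p+1) p := by
  unfold pp
  have e1 : (∏ t ∈ Finset.range p, ee n (2*n-1-i+t))
      = ∏ t ∈ Finset.range p, (-ee n (i-t)) := by
    refine Finset.prod_congr rfl fun t ht => ?_
    have ht' := Finset.mem_range.1 ht
    have h2 : 2*n-1-i+t = 2*n-1-(i-t) := by omega
    rw [h2, ee_flip (by omega)]
  have e2 : (∏ t ∈ Finset.range p, (-ee n (i-t)))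
      = (-1:ℂ)^p * ∏ t ∈ Finset.range p, ee n (i-t) := by
    calc (∏ t ∈ Finset.range p, (-ee n (i-t)))
        = ∏ t ∈ Finset.range p, ((-1) * ee n (i-t)) := by
          refine Finset.prod_congr rfl fun t _ => by ring
      _ = (∏ _t ∈ Finset.range p, (-1:ℂ)) * ∏ t ∈ Finset.range p, ee n (i-t) :=
          Finset.prod_mul_distrib
      _ = (-1:ℂ)^p * ∏ t ∈ Finset.range p, ee n (i-t) := by
          rw [Finset.prod_const, Finset.card_range]
  have e3 : (∏ t ∈ Finset.range p, ee n (i - t))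
      = ∏ t ∈ Finset.range p, ee n (i-p+1+t) := by
    rw [← Finset.prod_range_reflect (fun t => ee n (i-p+1+t)) p]
    refine Finset.prod_congr rfl fun t ht => ?_
    have ht' := Finset.mem_range.1 ht
    congr 1; omega
  rw [e1, e2, e3]

lemma pp_tel1 {n i p : ℕ} (h1 : 1 ≤ p) (h2 : p ≤ i) :
    ee n i * pp n (i-p+1) p = pp n (i-p+1) (p-1) := by
  obtain ⟨q, rfl⟩ : ∃ q, p = q+1 := ⟨p-1, by omega⟩
  unfold pp
  rw [Finset.prod_range_succ]
  have h3 : i-(q+1)+1+q = i := by omega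
  rw [h3, Nat.add_sub_cancel, mul_comm, mul_assoc, ee_sq, mul_one]

lemma pp_tel2 {n i p : ℕ} (h1 : 1 ≤ p) (h2 : p ≤ i) :
    ee n (i-p) * pp n (i-p) p = pp n (i-p+1) (p-1) := by
  obtain ⟨q, rfl⟩ : ∃ q, p = q+1 := ⟨p-1, by omega⟩
  unfold pp
  rw [Finset.prod_range_succ', Nat.add_sub_cancel, add_zero, mul_comm, mul_assoc, ee_sq, mul_one]
  refine Finset.prod_congr rfl fun t _ => ?_
  congr 1; omega

lemma odd_sympl (hΛ : ∀ i j, Λ i j = if (j:ℕ) = (i:ℕ)+1 then ee n i else 0)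
    (hF : ∀ i j, F i j = if (i:ℕ)+(j:ℕ)+2 = 2*n+1 then ee n i else 0)
    {q : ℕ} (hq : q % 2 = 1) :
    (Λ^q)ᵀ * F + F * Λ^q = 0 := by
  ext i j
  have hi := i.isLt; have hj := j.isLt
  rw [Matrix.add_apply, Matrix.zero_apply, XF_entry hF, FX_entry hF,
      pow_entry hΛ q (fl j) i, pow_entry hΛ q (fl i) j]
  have hfl : ∀ k : Fin (2*n), ((fl k : Fin (2*n)) : ℕ) = 2*n-1-(k:ℕ) := fun _ => rfl
  simp only [hfl]
  by_cases hc : (i:ℕ) + (j:ℕ) = 2*n-1+q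
  · rw [if_pos (by omega), if_pos (by omega)]
    have hqi : q ≤ (i:ℕ) := by omega
    have h1 : 2*n-1-(j:ℕ) = (i:ℕ)-q := by omega
    rw [h1, pp_flip hqi hi]
    have hodd : ((-1:ℂ))^q = -1 := Odd.neg_one_pow ⟨q/2, by omega⟩
    rw [hodd, mul_comm (pp n ((i:ℕ)-q) q), pp_tel2 (by omega) hqi]
    have h4 : ee n ↑i * (-1 * pp n ((i:ℕ)-q+1) q) = -(ee n ↑i * pp n ((i:ℕ)-q+1) q) := by ring
    rw [h4, pp_tel1 (by omega) hqi]
    ring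
  · rw [if_neg (by omega), if_neg (by omega), mul_zero, zero_mul, add_zero]

lemma pow_entry' (hΛ : ∀ i j, Λ i j = if (j:ℕ) = (i:ℕ)+1 then ee n i else 0)
    (p a b : ℕ) (ha : a < 2*n) (hb : b < 2*n) :
    (Λ^p) ⟨a, ha⟩ ⟨b, hb⟩ = if b = a + p then pp n a p else 0 :=
  pow_entry hΛ p ⟨a, ha⟩ ⟨b, hb⟩

lemma sympl_entry (hF : ∀ i j, F i j = if (i:ℕ)+(j:ℕ)+2 = 2*n+1 then ee n i else 0)
    (X : Matrix (Fin (2*n)) (Fin (2*n)) ℂ) (hs : Xᵀ*F + F*X = 0)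
    (a b : ℕ) (ha : a < 2*n) (hb : b < 2*n) :
    X ⟨2*n-1-b, by omega⟩ ⟨a, ha⟩ * ee n (2*n-1-b)
      + ee n a * X ⟨2*n-1-a, by omega⟩ ⟨b, hb⟩ = 0 := by
  have h := congrFun (congrFun hs ⟨a,ha⟩) ⟨b,hb⟩
  rw [Matrix.add_apply, Matrix.zero_apply, XF_entry hF, FX_entry hF] at h
  exact h

lemma zero_of_comm (hΛ : ∀ i j, Λ i j = if (j:ℕ) = (i:ℕ)+1 then ee n i else 0)
    (Y : Matrix (Fin (2*n)) (Fin (2*n)) ℂ) (h02 : 0 < 2*n)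
    (hcm : Λ*Y = Y*Λ) (h0 : ∀ j, Y ⟨0, h02⟩ j = 0) : Y = 0 := by
  have key : ∀ (i : ℕ) (hi : i < 2*n), ∀ j, Y ⟨i, hi⟩ j = 0 := by
    intro i
    induction i with
    | zero => intro hi j; exact h0 j
    | succ i ih =>
      intro hi j
      have hi' : i < 2*n := by omega
      have hcij : (Λ*Y) ⟨i,hi'⟩ j = (Y*Λ) ⟨i,hi'⟩ j := congrFun (congrFun hcm _) _
      rw [mulL_entry hΛ, mulR_entry hΛ, dif_pos (show (i:ℕ)+1 < 2*n from hi)] at hcij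
      by_cases hj : 1 ≤ (j:ℕ)
      · rw [dif_pos hj, ih hi', zero_mul] at hcij
        have := (mul_eq_zero.1 hcij).resolve_left (ee_ne n i)
        exact this
      · rw [dif_neg hj] at hcij
        exact (mul_eq_zero.1 hcij).resolve_left (ee_ne n i)
  ext i j
  have h := key i.val i.isLt j
  simpa using h

lemma KK_ne (n p : ℕ) (hn : 1 ≤ n) (hp : p < 2*n) (hpe : p % 2 = 0) :
    pp n 0 p * ee n 0 + ee n p * pp n (2*n-1-p) p ≠ 0 := by
  rcases Nat.eq_zero_or_pos p with rfl | hppos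
  · have h1 : ee n 0 = 1 := if_pos hn
    unfold pp
    rw [Finset.prod_range_zero, h1]
    norm_num
  · have h1 : pp n 0 p * ee n 0 = pp n 1 (p-1) := by
      have h := pp_tel2 (n:=n) (i:=p) (p:=p) hppos le_rfl
      rw [Nat.sub_self, Nat.zero_add] at h
      rw [mul_comm]; exact h
    have h2 : ee n p * pp n (2*n-1-p) p = pp n 1 (p-1) := by
      rw [pp_flip le_rfl hp, Even.neg_one_pow ⟨p/2, by omega⟩, one_mul,
        Nat.sub_self, Nat.zero_add]
      have h := pp_tel1 (n:=n) (i:=p) (p:=p) hppos le_rfl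
      rw [Nat.sub_self, Nat.zero_add] at h
      exact h
    rw [h1, h2, ← two_mul]
    exact mul_ne_zero two_ne_zero (pp_ne n 1 (p-1))

end Stmt2Aux

open Stmt2Aux

/-- The centralizer of the regular nilpotent element
`Λ = Σ_{i=1}^n E_{i,i+1} − Σ_{i=n+1}^{2n−1} E_{i,i+1}` in `sp(2n, ℂ)` (defined by the
antidiagonal symplectic form `F`) is the span of the odd powers `Λ^{2k−1}`, `1 ≤ k ≤ n`,
which is `n`-dimensional. -/
theorem stmt_2 (n : ℕ) (hn : 1 ≤ n)
    (F Λ : Matrix (Fin (2*n)) (Fin (2*n)) ℂ)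
    (hF : ∀ i j : Fin (2*n),
      F i j = if (i : ℕ) + (j : ℕ) + 2 = 2*n + 1 then (if (i : ℕ) < n then 1 else -1) else 0)
    (hΛ : ∀ i j : Fin (2*n),
      Λ i j = if (j : ℕ) = (i : ℕ) + 1 then (if (i : ℕ) < n then 1 else -1) else 0) :
    (Λᵀ * F + F * Λ = 0)
    ∧ {X : Matrix (Fin (2*n)) (Fin (2*n)) ℂ | Xᵀ * F + F * X = 0 ∧ Λ * X = X * Λ}
        = (Submodule.span ℂ (Set.range fun k : Fin n => Λ ^ (2*(k : ℕ) + 1)) :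
            Set (Matrix (Fin (2*n)) (Fin (2*n)) ℂ))
    ∧ Module.finrank ℂ
        (Submodule.span ℂ (Set.range fun k : Fin n => Λ ^ (2*(k : ℕ) + 1))) = n := by
  have h02 : 0 < 2*n := by omega
  have hΛ' : ∀ i j, Λ i j = if (j:ℕ) = (i:ℕ)+1 then ee n i else 0 := fun i j => hΛ i j
  have hF' : ∀ i j, F i j = if (i:ℕ)+(j:ℕ)+2 = 2*n+1 then ee n i else 0 := fun i j => hF i j
  have li : LinearIndependent ℂ (fun k : Fin n => Λ ^ (2*(k : ℕ) + 1)) := by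
    rw [Fintype.linearIndependent_iff]
    intro g hg k
    have hk2 : 2*(k:ℕ)+1 < 2*n := by have := k.isLt; omega
    have hentry := congrFun (congrFun hg (⟨0, h02⟩ : Fin (2*n))) ⟨2*(k:ℕ)+1, hk2⟩
    rw [Matrix.sum_apply, Matrix.zero_apply] at hentry
    have e2 : ∀ l : Fin n,
        (g l • Λ ^ (2*(l:ℕ)+1)) (⟨0, h02⟩ : Fin (2*n)) ⟨2*(k:ℕ)+1, hk2⟩
          = if (l:ℕ) = (k:ℕ) then g l * pp n 0 (2*(l:ℕ)+1) else 0 := by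
      intro l
      rw [Matrix.smul_apply, smul_eq_mul, pow_entry' hΛ' (2*(l:ℕ)+1) 0 (2*(k:ℕ)+1) h02 hk2]
      by_cases h : (l:ℕ) = (k:ℕ)
      · rw [if_pos (by omega), if_pos h]
      · rw [if_neg (by omega), if_neg h, mul_zero]
    rw [Finset.sum_congr rfl (fun l _ => e2 l)] at hentry
    have e3 : (∑ l : Fin n, if (l:ℕ) = (k:ℕ) then g l * pp n 0 (2*(l:ℕ)+1) else 0)
        = ∑ l : Fin n, if l = k then g l * pp n 0 (2*(l:ℕ)+1) else 0 :=
      Finset.sum_congr rfl fun l _ => by simp [Fin.ext_iff]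
    rw [e3, Finset.sum_ite_eq' Finset.univ k (fun l => g l * pp n 0 (2*(l:ℕ)+1)),
      if_pos (Finset.mem_univ k)] at hentry
    exact (mul_eq_zero.1 hentry).resolve_right (pp_ne n 0 _)
  refine ⟨?_, ?_, ?_⟩
  · have h1 := odd_sympl hΛ' hF' (q := 1) rfl
    rwa [pow_one] at h1
  · apply Set.Subset.antisymm
    · -- forward: centralizer ⊆ span
      rintro X ⟨hs, hc⟩
      set c : ℕ → ℂ := fun p => (if h : p < 2*n then X ⟨0, h02⟩ ⟨p, h⟩ else 0) / pp n 0 p with hc_def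
      have hcX : ∀ (b:ℕ) (hb : b < 2*n), c b * pp n 0 b = X ⟨0, h02⟩ ⟨b, hb⟩ := by
        intro b hb
        rw [hc_def]
        simp only [dif_pos hb]
        exact div_mul_cancel₀ _ (pp_ne n 0 b)
      set Z : Matrix (Fin (2*n)) (Fin (2*n)) ℂ := ∑ p ∈ Finset.range (2*n), c p • Λ^p with hZ_def
      have hZe : ∀ (a b : ℕ) (ha : a < 2*n) (hb : b < 2*n),
          Z ⟨a,ha⟩ ⟨b,hb⟩ = if a ≤ b then c (b-a) * pp n a (b-a) else 0 := by
        intro a b ha hb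
        have e0 : Z ⟨a,ha⟩ ⟨b,hb⟩
            = ∑ p ∈ Finset.range (2*n), c p * ((Λ^p) ⟨a,ha⟩ ⟨b,hb⟩) := by
          rw [hZ_def, Matrix.sum_apply]
          exact Finset.sum_congr rfl fun p _ => by rw [Matrix.smul_apply, smul_eq_mul]
        rw [e0]
        by_cases hab : a ≤ b
        · rw [Finset.sum_eq_single (b-a)]
          · rw [pow_entry' hΛ' (b-a) a b ha hb, if_pos (by omega), if_pos hab]
          · intro p hp hpn
            rw [pow_entry' hΛ' p a b ha hb, if_neg (by omega), mul_zero]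
          · intro hb'
            exact absurd (Finset.mem_range.2 (by omega)) hb'
        · rw [if_neg hab]
          refine Finset.sum_eq_zero fun p _ => ?_
          rw [pow_entry' hΛ' p a b ha hb, if_neg (by omega), mul_zero]
      have hZc : Λ * Z = Z * Λ := by
        rw [hZ_def, Finset.mul_sum, Finset.sum_mul]
        refine Finset.sum_congr rfl fun p _ => ?_
        rw [mul_smul_comm, smul_mul_assoc, ((Commute.refl Λ).pow_right p).eq]
      have hXZ : X = Z := by
        have h0 : ∀ j : Fin (2*n), (X - Z) ⟨0, h02⟩ j = 0 := by
          intro j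
          rw [Matrix.sub_apply]
          have hz := hZe 0 (j:ℕ) h02 j.isLt
          rw [if_pos (Nat.zero_le _), Nat.sub_zero, hcX (j:ℕ) j.isLt] at hz
          have hj : (⟨(j:ℕ), j.isLt⟩ : Fin (2*n)) = j := rfl
          rw [hj] at hz
          rw [hz, sub_self]
        have := zero_of_comm hΛ' (X - Z) h02 (by rw [mul_sub, sub_mul, hc, hZc]) h0
        exact sub_eq_zero.1 this
      have heven : ∀ p, p < 2*n → p % 2 = 0 → c p = 0 := by
        intro p hp hpe
        have hkill := sympl_entry hF' Z (by rw [← hXZ]; exact hs) p (2*n-1) hp (by omega)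
        simp only [Nat.sub_self, hZe] at hkill
        rw [if_pos (Nat.zero_le p), if_pos (show 2*n-1-p ≤ 2*n-1 by omega),
          Nat.sub_zero] at hkill
        have hsub : 2*n-1 - (2*n-1-p) = p := by omega
        rw [hsub] at hkill
        have hck : c p * (pp n 0 p * ee n 0 + ee n p * pp n (2*n-1-p) p) = 0 := by
          linear_combination hkill
        exact (mul_eq_zero.1 hck).resolve_right (KK_ne n p hn hp hpe)
      rw [hXZ]
      have : Z ∈ Submodule.span ℂ (Set.range fun k : Fin n => Λ ^ (2*(k : ℕ) + 1)) := by
        rw [hZ_def]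
        refine Submodule.sum_mem _ fun p hp => ?_
        rcases Nat.even_or_odd p with he | ho
        · rw [heven p (Finset.mem_range.1 hp) (Nat.even_iff.1 he), zero_smul]
          exact Submodule.zero_mem _
        · obtain ⟨k, hkn, hk⟩ : ∃ k, k < n ∧ p = 2*k+1 :=
            ⟨p/2, by have h1 := Nat.odd_iff.1 ho; have h2 := Finset.mem_range.1 hp; omega,
              by have := Nat.odd_iff.1 ho; omega⟩
          have hmem : Λ ^ p ∈ Set.range (fun k : Fin n => Λ ^ (2*(k:ℕ)+1)) :=
            ⟨⟨k, hkn⟩, by show Λ ^ (2*k+1) = Λ ^ p; rw [hk]⟩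
          exact Submodule.smul_mem _ _ (Submodule.subset_span hmem)
      exact this
    · -- backward: span ⊆ centralizer
      intro X hX
      let W : Submodule ℂ (Matrix (Fin (2*n)) (Fin (2*n)) ℂ) :=
        { carrier := {X | Xᵀ * F + F * X = 0 ∧ Λ * X = X * Λ}
          zero_mem' := by
            constructor
            · rw [transpose_zero, zero_mul, mul_zero, add_zero]
            · rw [mul_zero, zero_mul]
          add_mem' := by
            rintro a b ⟨ha1, ha2⟩ ⟨hb1, hb2⟩
            constructor
            · rw [transpose_add, add_mul, mul_add]
              calc aᵀ*F + bᵀ*F + (F*a + F*b) = (aᵀ*F + F*a) + (bᵀ*F + F*b) := by abel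
                _ = 0 := by rw [ha1, hb1, add_zero]
            · rw [mul_add, add_mul, ha2, hb2]
          smul_mem' := by
            rintro t a ⟨ha1, ha2⟩
            constructor
            · rw [transpose_smul, smul_mul_assoc, mul_smul_comm, ← smul_add, ha1, smul_zero]
            · rw [mul_smul_comm, smul_mul_assoc, ha2] }
      have hle : Submodule.span ℂ (Set.range fun k : Fin n => Λ ^ (2*(k : ℕ) + 1)) ≤ W := by
        rw [Submodule.span_le]
        rintro _ ⟨k, rfl⟩
        exact ⟨odd_sympl hΛ' hF' (q := 2*(k:ℕ)+1) (by omega),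
          ((Commute.refl Λ).pow_right (2*(k:ℕ)+1)).eq⟩
      exact hle hX
  · rw [finrank_span_eq_card li, Fintype.card_fin]
end

section
/- Let V be a finite-dimensional complex vector space, D : V → V a nilpotent linear endomorphism, W ⊆ V a linear subspace, i ∈ ℕ, and Γ ∈ W an element such that D^j(Γ) ∈ W for every integer j > i. Then there exists a map v : ℂ∖{0} → V with v(t) ∈ W for all t ≠ 0 such that exp(t⁻¹·D)(v(t)) converges to (1/i!)·D^i(Γ) as t → 0 (with t ≠ 0). -/
open Finset


/-- The exponential of a (nilpotent) endomorphism of a finite-dimensional complex vector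
space, given by the finite exponential series (all terms of degree `> finrank V` vanish
for a nilpotent endomorphism). -/
noncomputable def nilExp {V : Type*} [AddCommGroup V] [Module ℂ V] [FiniteDimensional ℂ V]
    (f : Module.End ℂ V) : Module.End ℂ V :=
  ∑ k ∈ Finset.range (Module.finrank ℂ V + 1), (k.factorial : ℂ)⁻¹ • f ^ k

lemma scalar_id (m : ℕ) : ∑ p ∈ Finset.HasAntidiagonal.antidiagonal m,
    ((-1 : ℂ)) ^ p.2 * ((p.1.factorial : ℂ)⁻¹ * (p.2.factorial : ℂ)⁻¹)
    = (m.factorial : ℂ)⁻¹ * (0 : ℂ) ^ m := by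
  rw [← Finset.Nat.sum_antidiagonal_swap, Finset.Nat.sum_antidiagonal_eq_sum_range_succ_mk]
  have hp : ((-1 : ℂ) + 1) ^ m = ∑ k ∈ range (m + 1), (-1:ℂ)^k * 1^(m-k) * (m.choose k) :=
    add_pow (-1 : ℂ) 1 m
  rw [neg_add_cancel] at hp
  rw [show ((0:ℂ)^m) = ∑ k ∈ range (m + 1), (-1:ℂ)^k * 1^(m-k) * (m.choose k) from hp,
    Finset.mul_sum]
  refine Finset.sum_congr rfl fun k hk => ?_
  have hkm : k ≤ m := Nat.lt_succ_iff.mp (mem_range.mp hk)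
  rw [Nat.cast_choose ℂ hkm]
  have h1 : (k.factorial : ℂ) ≠ 0 := Nat.cast_ne_zero.mpr k.factorial_ne_zero
  have h2 : ((m-k).factorial : ℂ) ≠ 0 := Nat.cast_ne_zero.mpr (m-k).factorial_ne_zero
  have h3 : (m.factorial : ℂ) ≠ 0 := Nat.cast_ne_zero.mpr m.factorial_ne_zero
  simp only [Prod.swap_prod_mk]
  field_simp
  ring

lemma nilExp_mul_nilExp_neg {V : Type*} [AddCommGroup V] [Module ℂ V] [FiniteDimensional ℂ V]
    (f : Module.End ℂ V) (hf : f ^ (Module.finrank ℂ V + 1) = 0) :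
    nilExp f * nilExp (-f) = 1 := by
  set n := Module.finrank ℂ V + 1 with hn
  have hfm : ∀ m, n ≤ m → f ^ m = 0 := fun m hm => by
    rw [← Nat.sub_add_cancel hm, pow_add, hf, mul_zero]
  have hterm : ∀ k l : ℕ, ((k.factorial:ℂ)⁻¹ • f ^ k) * ((l.factorial:ℂ)⁻¹ • (-f) ^ l)
      = ((-1:ℂ)^l * ((k.factorial:ℂ)⁻¹ * (l.factorial:ℂ)⁻¹)) • f ^ (k+l) := by
    intro k l
    have hneg : (-f) ^ l = ((-1:ℂ)^l) • f ^ l := by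
      rw [show -f = (-1:ℂ) • f by rw [neg_smul, one_smul], smul_pow]
    rw [hneg, smul_smul, smul_mul_smul_comm, pow_add]
    ring_nf
  unfold nilExp
  rw [Finset.sum_mul_sum, ← hn]
  simp only [hterm]
  rw [← Finset.sum_product' (s := range n) (t := range n)
      (f := fun k l => ((-1:ℂ)^l * ((k.factorial:ℂ)⁻¹ * (l.factorial:ℂ)⁻¹)) • f ^ (k+l))]
  -- restrict to k+l < n
  rw [← Finset.sum_filter_of_ne (p := fun p : ℕ × ℕ => p.1 + p.2 < n)
    (fun p hp hne => by
      by_contra h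
      exact hne (by rw [hfm _ (le_of_not_gt h), smul_zero]))]
  have hset : (range n ×ˢ range n).filter (fun p : ℕ × ℕ => p.1 + p.2 < n)
      = (range n).biUnion (fun m => Finset.HasAntidiagonal.antidiagonal m) := by
    ext ⟨k, l⟩
    simp only [Finset.mem_filter, Finset.mem_product, Finset.mem_range,
      Finset.mem_biUnion, Finset.HasAntidiagonal.mem_antidiagonal]
    constructor
    · rintro ⟨⟨-, -⟩, h⟩; exact ⟨k + l, h, rfl⟩
    · rintro ⟨m, hm, hkl⟩; omega
  rw [hset, Finset.sum_biUnion (fun a _ b _ hab => Finset.disjoint_left.mpr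
    (fun p hpa hpb => hab (by
      rw [← Finset.HasAntidiagonal.mem_antidiagonal.mp hpa, ← Finset.HasAntidiagonal.mem_antidiagonal.mp hpb])))]
  have hinner : ∀ m ∈ range n, (∑ p ∈ Finset.HasAntidiagonal.antidiagonal m,
      ((-1:ℂ)^p.2 * ((p.1.factorial:ℂ)⁻¹ * (p.2.factorial:ℂ)⁻¹)) • f ^ (p.1+p.2))
      = ((m.factorial:ℂ)⁻¹ * (0:ℂ)^m) • f ^ m := by
    intro m _
    rw [← scalar_id m, Finset.sum_smul]
    exact Finset.sum_congr rfl fun p hp => by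
      rw [Finset.HasAntidiagonal.mem_antidiagonal.mp hp]
  rw [Finset.sum_congr rfl hinner]
  rw [Finset.sum_eq_single_of_mem 0 (Finset.mem_range.mpr (Nat.succ_pos _))
    (fun m _ hm => by rw [zero_pow hm, mul_zero, zero_smul])]
  norm_num

lemma pow_dim_succ_eq_zero {V : Type*} [AddCommGroup V] [Module ℂ V] [FiniteDimensional ℂ V]
    (D : Module.End ℂ V) (hD : IsNilpotent D) :
    D ^ (Module.finrank ℂ V + 1) = 0 := by
  obtain ⟨m, hm⟩ := hD
  have h1 : LinearMap.ker (D ^ m) = ⊤ := by rw [hm]; exact LinearMap.ker_zero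
  have h2 : D ^ Module.finrank ℂ V = 0 := by
    apply LinearMap.ker_eq_top.mp
    exact top_le_iff.mp (h1 ▸ Module.End.ker_pow_le_ker_pow_finrank D m)
  rw [pow_succ, h2, zero_mul]

/-- Unipotent deformation: if `Γ ∈ W` and `D^j Γ ∈ W` for all `j > i`, then there is a
family `v(t) ∈ W` with `exp(t⁻¹ D)(v(t)) → (1/i!) D^i Γ` as `t → 0`, `t ≠ 0`. -/
theorem stmt_5 {V : Type*} [AddCommGroup V] [Module ℂ V] [TopologicalSpace V]
    [IsTopologicalAddGroup V] [ContinuousSMul ℂ V] [FiniteDimensional ℂ V]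
    (D : Module.End ℂ V) (hD : IsNilpotent D) (W : Submodule ℂ V) (i : ℕ)
    (Γ : V) (hΓ : Γ ∈ W) (hHigh : ∀ j : ℕ, i < j → (D ^ j) Γ ∈ W) :
    ∃ v : ℂ → V, (∀ t : ℂ, t ≠ 0 → v t ∈ W) ∧
      Filter.Tendsto (fun t : ℂ => nilExp (t⁻¹ • D) (v t)) (nhdsWithin 0 {0}ᶜ)
        (nhds ((i.factorial : ℂ)⁻¹ • (D ^ i) Γ)) := by
  set n := Module.finrank ℂ V + 1 with hn
  have hDn : D ^ n = 0 := pow_dim_succ_eq_zero D hD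
  have hDm : ∀ m, n ≤ m → D ^ m = 0 := fun m hm => by
    rw [← Nat.sub_add_cancel hm, pow_add, hDn, mul_zero]
  -- the deformation family
  set v : ℂ → V := fun t => t^i • Γ - ∑ j ∈ Finset.Ico (i+1) n,
      (t^i * (t⁻¹)^j * ((j.factorial : ℂ))⁻¹) • (nilExp (-(t⁻¹ • D))) ((D^j) Γ) with hv
  refine ⟨v, ?_, ?_⟩
  · -- membership in W
    intro t _
    apply Submodule.sub_mem
    · exact Submodule.smul_mem _ _ hΓ
    · apply Submodule.sum_mem
      intro j hj
      apply Submodule.smul_mem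
      have hij : i < j := (Finset.mem_Ico.mp hj).1
      unfold nilExp
      rw [LinearMap.sum_apply]
      apply Submodule.sum_mem
      intro k _
      rw [LinearMap.smul_apply]
      apply Submodule.smul_mem
      have hpow : (-(t⁻¹ • D)) ^ k = ((-t⁻¹ : ℂ))^k • D ^ k := by
        rw [show -(t⁻¹ • D) = (-t⁻¹ : ℂ) • D by rw [neg_smul], smul_pow]
      rw [hpow, LinearMap.smul_apply]
      apply Submodule.smul_mem
      rw [← Module.End.mul_apply, ← pow_add]
      exact hHigh (k + j) (lt_of_lt_of_le hij (Nat.le_add_left j k))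
  · -- the limit
    set F : ℂ → ℕ → V := fun t k => (t^i * (t⁻¹)^k * ((k.factorial : ℂ))⁻¹) • (D^k) Γ with hF
    have hcomp : ∀ t : ℂ, t ≠ 0 →
        nilExp (t⁻¹ • D) (v t) = ∑ k ∈ Finset.range (min (i+1) n), F t k := by
      intro t ht
      have hfn : (t⁻¹ • D) ^ n = 0 := by rw [smul_pow, hDn, smul_zero]
      have hinv : ∀ x : V, nilExp (t⁻¹ • D) (nilExp (-(t⁻¹ • D)) x) = x := by
        intro x
        rw [← Module.End.mul_apply, nilExp_mul_nilExp_neg _ hfn, Module.End.one_apply]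
      have hEΓ : nilExp (t⁻¹ • D) (t^i • Γ) = ∑ k ∈ Finset.range n, F t k := by
        unfold nilExp
        rw [LinearMap.sum_apply]
        refine Finset.sum_congr rfl fun k _ => ?_
        rw [LinearMap.smul_apply, smul_pow, LinearMap.smul_apply, hF]
        simp only [map_smul]
        rw [smul_smul, smul_smul]
        ring_nf
      rw [hv]
      simp only [map_sub, map_sum, map_smul, hinv, hEΓ]
      have hsplit : ∑ k ∈ Finset.range n, F t k
          = (∑ k ∈ Finset.range (min (i+1) n), F t k) + ∑ j ∈ Finset.Ico (i+1) n, F t j := by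
        rcases le_or_gt (i+1) n with h | h
        · rw [min_eq_left h]; simp only [Finset.range_eq_Ico]
          exact (Finset.sum_Ico_consecutive _ (Nat.zero_le _) h).symm
        · rw [min_eq_right h.le, Finset.Ico_eq_empty (by omega), Finset.sum_empty, add_zero]
      rw [hsplit, add_sub_cancel_right]
    -- continuous model
    set h : ℂ → V := fun t => ∑ k ∈ Finset.range (min (i+1) n),
        (t^(i-k) * ((k.factorial : ℂ))⁻¹) • (D^k) Γ with hh
    have hcont : Continuous h := by
      apply continuous_finset_sum
      intro k _
      exact (((continuous_pow (i-k)).mul continuous_const).smul continuous_const)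
    have hh0 : h 0 = (i.factorial : ℂ)⁻¹ • (D ^ i) Γ := by
      rcases lt_or_ge i n with hin | hin
      · have : min (i+1) n = i + 1 := min_eq_left hin
        rw [hh, this]
        simp only
        rw [Finset.sum_eq_single_of_mem i (Finset.mem_range.mpr (Nat.lt_succ_self i))
          (fun k hk hki => by
            have : i - k ≠ 0 := by
              have := Finset.mem_range.mp hk; omega
            rw [zero_pow this, zero_mul, zero_smul])]
        rw [Nat.sub_self, pow_zero, one_mul]
      · have hDi : (D ^ i) Γ = 0 := by rw [hDm i hin, LinearMap.zero_apply]
        rw [hh, hDi, smul_zero]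
        simp only
        apply Finset.sum_eq_zero
        intro k hk
        have hk' : k < n := lt_of_lt_of_le (Finset.mem_range.mp hk) (min_le_right _ _)
        have : i - k ≠ 0 := by omega
        rw [zero_pow this, zero_mul, zero_smul]
    have htends : Filter.Tendsto h (nhdsWithin 0 {0}ᶜ) (nhds ((i.factorial : ℂ)⁻¹ • (D ^ i) Γ)) := by
      rw [← hh0]
      exact (hcont.tendsto 0).mono_left nhdsWithin_le_nhds
    refine htends.congr' ?_
    filter_upwards [self_mem_nhdsWithin] with t ht
    have ht0 : t ≠ 0 := ht
    rw [hcomp t ht0, hh]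
    refine Finset.sum_congr rfl fun k hk => ?_
    have hki : k ≤ i := by
      have := Finset.mem_range.mp hk
      omega
    have : t^(i-k) * ((k.factorial : ℂ))⁻¹ = t^i * (t⁻¹)^k * ((k.factorial : ℂ))⁻¹ := by
      rw [show i = (i - k) + k by omega, pow_add]
      field_simp
      rw [Nat.add_sub_cancel, mul_assoc, ← mul_pow, mul_one_div_cancel ht0, one_pow, mul_one]
    rw [hF, this]
end

section
/- Let μ = (μ₁ ≥ μ₂ ≥ … ≥ μ_l) be a partition of n with all parts μ_k ≥ 1, and let 𝔞_μ ⊆ sl(n+1,ℂ) be the ℂ-linear span of the matrix units E_{j, n−k+2} for 1 ≤ k ≤ l and 1 ≤ j ≤ μ_k. Then 𝔞_μ is an n-dimensional abelian Lie ideal of the Borel subalgebra 𝔟 of upper triangular trace-zero matrices: dim 𝔞_μ = n, [𝔞_μ, 𝔞_μ] = 0, and [𝔟, 𝔞_μ] ⊆ 𝔞_μ. -/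
/-- For a partition `μ` of `n`, the span `𝔞_μ` of the matrix units `E_{j, n−k+2}`
(`1 ≤ k ≤ l`, `1 ≤ j ≤ μ_k`) is an `n`-dimensional abelian ideal of the Borel
subalgebra of upper triangular trace-zero matrices in `sl(n+1, ℂ)`. -/
theorem stmt_8 (n l : ℕ) (hl : 1 ≤ l) (μ : ℕ → ℕ)
    (hpos : ∀ k, 1 ≤ k → k ≤ l → 1 ≤ μ k)
    (hmono : ∀ k k', 1 ≤ k → k ≤ k' → k' ≤ l → μ k' ≤ μ k)
    (hsum : ∑ k ∈ Finset.Icc 1 l, μ k = n)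
    (A : Submodule ℂ (Matrix (Fin (n+1)) (Fin (n+1)) ℂ))
    (hA : A = Submodule.span ℂ
      {E | ∃ k j : ℕ, 1 ≤ k ∧ k ≤ l ∧ 1 ≤ j ∧ j ≤ μ k ∧
        E = Matrix.of fun a b : Fin (n+1) =>
          if (a : ℕ) + 1 = j ∧ (b : ℕ) + k = n + 1 then (1 : ℂ) else 0}) :
    Module.finrank ℂ A = n
    ∧ (∀ X ∈ A, ∀ Y ∈ A, X * Y - Y * X = 0)
    ∧ (∀ X ∈ A, Matrix.trace X = 0 ∧ ∀ a b : Fin (n+1), (b : ℕ) < (a : ℕ) → X a b = 0)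
    ∧ (∀ B : Matrix (Fin (n+1)) (Fin (n+1)) ℂ, Matrix.trace B = 0 →
        (∀ a b : Fin (n+1), (b : ℕ) < (a : ℕ) → B a b = 0) →
        ∀ X ∈ A, B * X - X * B ∈ A) := by
  classical
  -- basic bounds
  have hbound : ∀ k, 1 ≤ k → k ≤ l → μ k + (l - 1) ≤ n := by
    intro k hk1 hkl
    have hkmem : k ∈ Finset.Icc 1 l := Finset.mem_Icc.2 ⟨hk1, hkl⟩
    have h1 : ∑ i ∈ (Finset.Icc 1 l).erase k, μ i + μ k = n := by
      rw [Finset.sum_erase_add _ _ hkmem]; exact hsum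
    have h2 : ((Finset.Icc 1 l).erase k).card • 1 ≤ ∑ i ∈ (Finset.Icc 1 l).erase k, μ i := by
      apply Finset.card_nsmul_le_sum
      intro i hi
      rcases Finset.mem_Icc.1 (Finset.mem_of_mem_erase hi) with ⟨h, h'⟩
      exact hpos i h h'
    have h3 : ((Finset.Icc 1 l).erase k).card = l - 1 := by
      rw [Finset.card_erase_of_mem hkmem, Nat.card_Icc]
      omega
    rw [h3] at h2
    simp only [smul_eq_mul, mul_one] at h2
    omega
  have hln : l ≤ n := by have := hbound 1 le_rfl hl; have := hpos 1 le_rfl hl; omega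
  -- The support predicate
  set P : Fin (n+1) → Fin (n+1) → Prop :=
    fun a b => n + 1 ≤ (b : ℕ) + l ∧ (a : ℕ) + 1 ≤ μ (n + 1 - (b : ℕ)) with hP
  -- key consequence of P: strictly upper triangular with column in the last l columns
  have hPlt : ∀ a b : Fin (n+1), P a b → (a : ℕ) + l ≤ n ∧ n + 1 ≤ (b : ℕ) + l := by
    intro a b ⟨h1, h2⟩
    have hb : (b : ℕ) ≤ n := by omega
    have := hbound (n + 1 - (b : ℕ)) (by omega) (by omega)
    omega
  -- The "supported on P" submodule
  set A' : Submodule ℂ (Matrix (Fin (n+1)) (Fin (n+1)) ℂ) :=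
    { carrier := {X | ∀ a b : Fin (n+1), ¬ P a b → X a b = 0}
      add_mem' := by intro X Y hX hY a b h; simp [Matrix.add_apply, hX a b h, hY a b h]
      zero_mem' := by intro a b _; simp
      smul_mem' := by intro c X hX a b h; simp [Matrix.smul_apply, hX a b h] } with hA'
  have memA' : ∀ X, X ∈ A' ↔ ∀ a b : Fin (n+1), ¬ P a b → X a b = 0 := fun X => Iff.rfl
  -- the indexing finset
  set S : Finset (Fin (n+1) × Fin (n+1)) := Finset.univ.filter (fun p => P p.1 p.2) with hS
  set g : S → Matrix (Fin (n+1)) (Fin (n+1)) ℂ :=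
    fun p => Matrix.single p.1.1 p.1.2 1 with hg
  -- each basis matrix indexed by S is a generator
  have hgen : ∀ p : Fin (n+1) × Fin (n+1), P p.1 p.2 →
      Matrix.single p.1 p.2 1 ∈
      {E : Matrix (Fin (n+1)) (Fin (n+1)) ℂ | ∃ k j : ℕ, 1 ≤ k ∧ k ≤ l ∧ 1 ≤ j ∧ j ≤ μ k ∧
        E = Matrix.of fun a b : Fin (n+1) =>
          if (a : ℕ) + 1 = j ∧ (b : ℕ) + k = n + 1 then (1 : ℂ) else 0} := by
    rintro ⟨a, b⟩ hq
    obtain ⟨h1, h2⟩ : n + 1 ≤ (b : ℕ) + l ∧ (a : ℕ) + 1 ≤ μ (n + 1 - (b : ℕ)) := hq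
    have hb : (b : ℕ) ≤ n := by omega
    refine ⟨n + 1 - (b : ℕ), (a : ℕ) + 1, by omega, by omega, by omega, h2, ?_⟩
    ext a' b'
    simp only [Matrix.single, Matrix.of_apply]
    have : ((a' : ℕ) + 1 = (a : ℕ) + 1 ∧ (b' : ℕ) + (n + 1 - (b : ℕ)) = n + 1) ↔
        (a = a' ∧ b = b') := by
      constructor
      · rintro ⟨ha, hb'⟩
        exact ⟨Fin.ext (by omega), Fin.ext (by omega)⟩
      · rintro ⟨ha, hb'⟩
        subst ha; subst hb'; omega
    rw [if_congr this rfl rfl]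
  -- A = A'
  have hAA' : A = A' := by
    apply le_antisymm
    · rw [hA, Submodule.span_le]
      rintro E ⟨k, j, hk1, hkl, hj1, hjμ, rfl⟩
      intro a b hnP
      simp only [Matrix.of_apply]
      rw [if_neg]
      rintro ⟨ha, hb⟩
      apply hnP
      have hk : n + 1 - (b : ℕ) = k := by omega
      exact ⟨by omega, by rw [hk]; omega⟩
    · intro X hX
      rw [hA]
      rw [Matrix.matrix_eq_sum_single X]
      apply Submodule.sum_mem
      intro a _
      apply Submodule.sum_mem
      intro b _
      by_cases h : P a b
      · have : Matrix.single a b (X a b) = X a b • Matrix.single a b 1 := by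
          rw [Matrix.smul_single, smul_eq_mul, mul_one]
        rw [this]
        exact Submodule.smul_mem _ _ (Submodule.subset_span (hgen (a, b) h))
      · rw [(memA' X).1 hX a b h]
        simp
  -- A is the span of the range of g
  have hArange : A = Submodule.span ℂ (Set.range g) := by
    apply le_antisymm
    · rw [hAA']
      intro X hX
      rw [Matrix.matrix_eq_sum_single X]
      apply Submodule.sum_mem
      intro a _
      apply Submodule.sum_mem
      intro b _
      by_cases h : P a b
      · have : Matrix.single a b (X a b) = X a b • Matrix.single a b 1 := by
          rw [Matrix.smul_single, smul_eq_mul, mul_one]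
        rw [this]
        refine Submodule.smul_mem _ _ (Submodule.subset_span ?_)
        exact ⟨⟨(a, b), Finset.mem_filter.2 ⟨Finset.mem_univ _, h⟩⟩, rfl⟩
      · rw [(memA' X).1 hX a b h]
        simp
    · rw [hA, Submodule.span_le]
      rintro E ⟨⟨p, hp⟩, rfl⟩
      exact Submodule.subset_span (hgen p (Finset.mem_filter.1 hp).2)
  -- linear independence of g
  have hli : LinearIndependent ℂ g := by
    have hfull : LinearIndependent ℂ
        (fun p : Fin (n+1) × Fin (n+1) => Matrix.single p.1 p.2 (1 : ℂ)) := by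
      have := (Matrix.stdBasis ℂ (Fin (n+1)) (Fin (n+1))).linearIndependent
      convert this using 1
      ext p
      rw [Matrix.stdBasis_eq_single]
    exact hfull.comp (fun p : S => (p : Fin (n+1) × Fin (n+1))) Subtype.val_injective
  -- cardinality of S
  have hScard : S.card = n := by
    have h1 : S.card = ∑ p : Fin (n+1) × Fin (n+1),
        if P p.1 p.2 then (1 : ℕ) else 0 := by
      rw [hS, Finset.card_filter]
    have h2 : ∀ m : ℕ, m ≤ n + 1 →
        (∑ a : Fin (n+1), if (a : ℕ) + 1 ≤ m then (1 : ℕ) else 0) = m := by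
      intro m hm
      rw [Fin.sum_univ_eq_sum_range (fun i => if i + 1 ≤ m then (1 : ℕ) else 0)]
      rw [← Finset.sum_filter]
      have : (Finset.range (n+1)).filter (fun i => i + 1 ≤ m) = Finset.range m := by
        ext i
        simp only [Finset.mem_filter, Finset.mem_range]
        omega
      rw [this]
      simp
    rw [h1, ← Finset.univ_product_univ, Finset.sum_product_right]
    have h3 : ∀ b : Fin (n+1),
        (∑ a : Fin (n+1), if P a b then (1 : ℕ) else 0) =
        if n + 1 ≤ (b : ℕ) + l then μ (n + 1 - (b : ℕ)) else 0 := by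
      intro b
      by_cases hb : n + 1 ≤ (b : ℕ) + l
      · rw [if_pos hb]
        have hμn : μ (n + 1 - (b : ℕ)) ≤ n + 1 := by
          have hbn : (b : ℕ) ≤ n := by omega
          have := hbound (n + 1 - (b : ℕ)) (by omega) (by omega)
          omega
        calc (∑ a : Fin (n+1), if P a b then (1 : ℕ) else 0)
            = ∑ a : Fin (n+1), if (a : ℕ) + 1 ≤ μ (n + 1 - (b : ℕ)) then (1 : ℕ) else 0 := by
              apply Finset.sum_congr rfl
              intro a _
              simp only [hP]
              exact if_congr (by tauto) rfl rfl
          _ = μ (n + 1 - (b : ℕ)) := h2 _ hμn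
      · rw [if_neg hb]
        apply Finset.sum_eq_zero
        intro a _
        apply if_neg
        simp only [hP]
        tauto
    dsimp only
    rw [Finset.sum_congr rfl (fun b _ => h3 b)]
    rw [Fin.sum_univ_eq_sum_range (fun i => if n + 1 ≤ i + l then μ (n + 1 - i) else 0)]
    rw [← Finset.sum_filter]
    have h4 : (Finset.range (n+1)).filter (fun i => n + 1 ≤ i + l) =
        Finset.Icc (n + 1 - l) n := by
      ext i
      simp only [Finset.mem_filter, Finset.mem_range, Finset.mem_Icc]
      omega
    rw [h4]
    refine Eq.trans ?_ hsum
    apply Finset.sum_nbij' (fun i => n + 1 - i) (fun k => n + 1 - k)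
    · intro i hi
      simp only [Finset.mem_Icc] at hi ⊢
      omega
    · intro k hk
      simp only [Finset.mem_Icc] at hk ⊢
      omega
    · intro i hi
      simp only [Finset.mem_Icc] at hi
      omega
    · intro k hk
      simp only [Finset.mem_Icc] at hk
      omega
    · exact fun a _ => rfl
  -- products of elements of A vanish
  have hmul : ∀ X ∈ A, ∀ Y ∈ A, X * Y = 0 := by
    intro X hX Y hY
    rw [hAA'] at hX hY
    ext a b
    rw [Matrix.mul_apply]
    simp only [Matrix.zero_apply]
    apply Finset.sum_eq_zero
    intro c _
    by_cases hXc : X a c = 0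
    · rw [hXc, zero_mul]
    by_cases hYc : Y c b = 0
    · rw [hYc, mul_zero]
    exfalso
    have hPac : P a c := by by_contra h; exact hXc ((memA' X).1 hX a c h)
    have hPcb : P c b := by by_contra h; exact hYc ((memA' Y).1 hY c b h)
    have h1 := hPlt a c hPac
    have h2 := hPlt c b hPcb
    omega
  constructor
  · rw [hArange, finrank_span_eq_card hli, Fintype.card_coe, hScard]
  refine ⟨?_, ?_, ?_⟩
  · intro X hX Y hY
    rw [hmul X hX Y hY, hmul Y hY X hX, sub_zero]
  · intro X hX
    rw [hAA'] at hX
    have hlow : ∀ a b : Fin (n+1), (b : ℕ) ≤ (a : ℕ) → X a b = 0 := by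
      intro a b hba
      apply (memA' X).1 hX
      intro h
      have := hPlt a b h
      omega
    constructor
    · rw [Matrix.trace]
      apply Finset.sum_eq_zero
      intro a _
      exact hlow a a le_rfl
    · intro a b hba
      exact hlow a b (le_of_lt hba)
  · intro B _ hB X hX
    rw [hAA'] at hX ⊢
    intro a b hnP
    have hBu : ∀ a b : Fin (n+1), ¬ ((a : ℕ) ≤ (b : ℕ)) → B a b = 0 := by
      intro a b h
      exact hB a b (by omega)
    simp only [Matrix.sub_apply, Matrix.mul_apply]
    have t1 : ∑ c, B a c * X c b = 0 := by
      apply Finset.sum_eq_zero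
      intro c _
      by_cases hXc : X c b = 0
      · rw [hXc, mul_zero]
      by_cases hBc : B a c = 0
      · rw [hBc, zero_mul]
      exfalso
      have hPcb : P c b := by by_contra h; exact hXc ((memA' X).1 hX c b h)
      have hac : (a : ℕ) ≤ (c : ℕ) := by by_contra h; exact hBc (hBu a c h)
      exact hnP ⟨hPcb.1, by have := hPcb.2; omega⟩
    have t2 : ∑ c, X a c * B c b = 0 := by
      apply Finset.sum_eq_zero
      intro c _
      by_cases hXc : X a c = 0
      · rw [hXc, zero_mul]
      by_cases hBc : B c b = 0
      · rw [hBc, mul_zero]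
      exfalso
      have hPac : P a c := by by_contra h; exact hXc ((memA' X).1 hX a c h)
      have hcb : (c : ℕ) ≤ (b : ℕ) := by by_contra h; exact hBc (hBu c b h)
      apply hnP
      have h1 : n + 1 ≤ (b : ℕ) + l := by have := hPac.1; omega
      have hbn : (b : ℕ) ≤ n := by omega
      have hmon : μ (n + 1 - (c : ℕ)) ≤ μ (n + 1 - (b : ℕ)) := by
        apply hmono _ _ (by omega) (by omega) (by have := hPac.1; omega)
      exact ⟨h1, le_trans hPac.2 hmon⟩
    rw [t1, t2, sub_zero]
end

section
/- Let μ = (μ₁ ≥ … ≥ μ_l) be a partition of n with all parts μ_k ≥ 1, and for h ∈ {1,…,n} let i(h) := μ₁ + 1 − (h − Σ_{i>k} μ_i), where k is the unique index with Σ_{i>k} μ_i < h ≤ Σ_{i≥k} μ_i. For z ∈ ℤⁿ and 1 ≤ j ≤ n+1−h write z_j(h) := Σ_{k=j}^{j+h−1} z_k. Then there exists z = (z₁,…,zₙ) ∈ ℤⁿ such that: z_{μ₁} = 0; z_i > 0 for all i ≠ μ₁; and for every h ∈ {1,…,n} and every j with 1 ≤ j ≤ n+1−h and j ≠ i(h),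 one has z_{i(h)}(h) < z_j(h). -/
open Finset

lemma tele_sum (f : ℕ → ℤ) : ∀ b a : ℕ, 1 ≤ a → a ≤ b + 1 →
    ∑ y ∈ Finset.Icc a b, (f y - f (y-1)) = f b - f (a-1) := by
  intro b
  induction b with
  | zero =>
    intro a h1 h2
    interval_cases a
    simp
  | succ b ih =>
    intro a h1 h2
    rcases Nat.lt_or_ge a (b+2) with h | h
    · have hab : a ≤ b + 1 := by omega
      rw [Finset.sum_Icc_succ_top hab, ih a h1 hab]
      simp
    · have : a = b + 2 := by omega
      subst this
      rw [Finset.Icc_eq_empty (by omega)]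
      simp

lemma shift_sum (g : ℕ → ℤ) (c a b : ℕ) :
    ∑ t ∈ Finset.Icc (c+a) (c+b), g t = ∑ y ∈ Finset.Icc a b, g (c + y) := by
  rw [← Finset.map_add_left_Icc, Finset.sum_map]
  rfl

/-- Proposition: for any partition `μ` of `n`, the system of inequalities `(IE_μ)`
has an integer solution `z = (z₁, …, zₙ)`: `z_{μ₁} = 0`, `z_i > 0` for `i ≠ μ₁`, and
`z_{i(h)}(h) < z_j(h)` for all `1 ≤ h ≤ n` and `1 ≤ j ≤ n+1−h` with `j ≠ i(h)`, where
`i(h) = μ₁ + 1 − (h − Σ_{i>k} μ_i)` for the unique `k` with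
`Σ_{i>k} μ_i < h ≤ Σ_{i≥k} μ_i`, and `z_j(h) = Σ_{t=j}^{j+h−1} z_t`. -/
theorem stmt_10 (n l : ℕ) (hl : 1 ≤ l) (μ : ℕ → ℕ)
    (hpos : ∀ k, 1 ≤ k → k ≤ l → 1 ≤ μ k)
    (hmono : ∀ k k', 1 ≤ k → k ≤ k' → k' ≤ l → μ k' ≤ μ k)
    (hsum : ∑ k ∈ Finset.Icc 1 l, μ k = n) :
    ∃ z : ℕ → ℤ,
      z (μ 1) = 0
      ∧ (∀ i, 1 ≤ i → i ≤ n → i ≠ μ 1 → 0 < z i)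
      ∧ (∀ h k, 1 ≤ h → h ≤ n → 1 ≤ k → k ≤ l →
          (∑ i ∈ Finset.Icc (k+1) l, μ i) < h → h ≤ ∑ i ∈ Finset.Icc k l, μ i →
          ∀ j, 1 ≤ j → j ≤ n + 1 - h →
            j ≠ μ 1 + 1 - (h - ∑ i ∈ Finset.Icc (k+1) l, μ i) →
            (∑ t ∈ Finset.Icc (μ 1 + 1 - (h - ∑ i ∈ Finset.Icc (k+1) l, μ i))
                ((μ 1 + 1 - (h - ∑ i ∈ Finset.Icc (k+1) l, μ i)) + h - 1), z t)
              < ∑ t ∈ Finset.Icc j (j + h - 1), z t) := by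
  classical
  set c := μ 1 with hc
  set T : ℕ → ℕ := fun k => ∑ i ∈ Finset.Icc (k+1) l, μ i with hT
  set P : ℤ := (n : ℤ) + 1 with hP
  set M : ℤ := 2*(n:ℤ) + 2 with hM
  set ρ : ℕ → ℤ := fun y => if ∃ k ∈ Finset.Icc 1 l, T k = y then 0 else P with hρ
  set z : ℕ → ℤ := fun i => if i = c then 0 else if i < c then M + 1
      else M + (ρ (i - c) - ρ (i - c - 1)) with hzdef
  -- basic facts
  have hc1 : 1 ≤ c := hpos 1 le_rfl hl
  have hcn : c ≤ n := by
    rw [← hsum]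
    exact Finset.single_le_sum (f := μ) (fun i _ => Nat.zero_le _)
      (by simp [Finset.mem_Icc, hl])
  have hTl : T l = 0 := by
    simp only [hT]
    rw [Finset.Icc_eq_empty (by omega)]
    simp
  have hρ0 : ρ 0 = 0 := by
    simp only [hρ]
    rw [if_pos ⟨l, by simp [Finset.mem_Icc, hl], hTl⟩]
  have hρ_bd : ∀ y, ρ y = 0 ∨ ρ y = P := by
    intro y; simp only [hρ]; split <;> simp
  have hρ_nonneg : ∀ y, 0 ≤ ρ y := by
    intro y; rcases hρ_bd y with h | h <;> simp only [h, hP] <;> omega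
  have hρ_le : ∀ y, ρ y ≤ P := by
    intro y; rcases hρ_bd y with h | h <;> simp only [h, hP] <;> omega
  have hρ_boundary : ∀ k, 1 ≤ k → k ≤ l → ρ (T k) = 0 := by
    intro k h1 h2
    simp only [hρ]
    rw [if_pos ⟨k, by simp [Finset.mem_Icc, h1, h2], rfl⟩]
  have hρ_zero : ∀ y, ρ y = 0 → ∃ k', 1 ≤ k' ∧ k' ≤ l ∧ T k' = y := by
    intro y hy
    simp only [hρ] at hy
    split at hy
    · next hcond =>
      obtain ⟨k', hk', hTk'⟩ := hcond
      exact ⟨k', (Finset.mem_Icc.1 hk').1, (Finset.mem_Icc.1 hk').2, hTk'⟩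
    · exfalso; simp only [hP] at hy; omega
  have hT_anti : ∀ k1 k2 : ℕ, k1 ≤ k2 → T k2 ≤ T k1 := by
    intro k1 k2 hk
    exact Finset.sum_le_sum_of_subset (Finset.Icc_subset_Icc_left (by omega))
  -- z facts
  have hz_c : z c = 0 := by simp [hzdef]
  have hz_left : ∀ i, i < c → z i = M + 1 := by
    intro i hi
    simp only [hzdef]
    rw [if_neg (by omega), if_pos hi]
  have hz_right : ∀ y, 1 ≤ y → z (c + y) = M + (ρ y - ρ (y-1)) := by
    intro y hy
    simp only [hzdef]
    rw [if_neg (by omega), if_neg (by omega), Nat.add_sub_cancel_left]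
  have hMpos : (0:ℤ) < M := by simp only [hM]; positivity
  -- sum lemmas
  have hsum_leftI : ∀ a b : ℕ, a ≤ b → b < c →
      ∑ t ∈ Finset.Icc a b, z t = ((b:ℤ) + 1 - a) * (M + 1) := by
    intro a b hab hbc
    rw [Finset.sum_congr rfl (fun t ht => hz_left t (lt_of_le_of_lt (Finset.mem_Icc.1 ht).2 hbc))]
    rw [Finset.sum_const, Nat.card_Icc]
    have : ((b + 1 - a : ℕ) : ℤ) = (b:ℤ) + 1 - a := by omega
    rw [nsmul_eq_mul, this]
  have hsum_rightI : ∀ a b : ℕ, c < a → a ≤ b →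
      ∑ t ∈ Finset.Icc a b, z t = ((b:ℤ) + 1 - a) * M + (ρ (b - c) - ρ (a - 1 - c)) := by
    intro a b hca hab
    rw [show Finset.Icc a b = Finset.Icc (c + (a-c)) (c + (b-c)) by
      congr 1 <;> omega]
    rw [shift_sum]
    have h1 : ∀ y ∈ Finset.Icc (a - c) (b - c), z (c + y) = M + (ρ y - ρ (y-1)) := by
      intro y hy
      exact hz_right y (by have := (Finset.mem_Icc.1 hy).1; omega)
    rw [Finset.sum_congr rfl h1, Finset.sum_add_distrib, Finset.sum_const, Nat.card_Icc,
      tele_sum ρ (b - c) (a - c) (by omega) (by omega)]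
    have : ((b - c + 1 - (a - c) : ℕ) : ℤ) = (b:ℤ) + 1 - a := by omega
    rw [nsmul_eq_mul, this]
    have : a - c - 1 = a - 1 - c := by omega
    rw [this]
  have hsum_midI : ∀ a b : ℕ, 1 ≤ a → a ≤ c → c ≤ b →
      ∑ t ∈ Finset.Icc a b, z t = ((b:ℤ) - a) * M + ((c:ℤ) - a) + ρ (b - c) := by
    intro a b ha hac hcb
    have hsplit : Finset.Icc a b = Finset.Icc a c ∪ Finset.Ioc c b := by
      ext x
      simp only [Finset.mem_Icc, Finset.mem_Ioc, Finset.mem_union]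
      omega
    have hdisj : Disjoint (Finset.Icc a c) (Finset.Ioc c b) := by
      rw [Finset.disjoint_left]
      intro x hx hx'
      have := (Finset.mem_Icc.1 hx).2
      have := (Finset.mem_Ioc.1 hx').1
      omega
    rw [hsplit, Finset.sum_union hdisj]
    have hfirst : ∑ t ∈ Finset.Icc a c, z t = ((c:ℤ) - a) * (M + 1) := by
      rcases Nat.eq_or_lt_of_le hac with h | h
      · subst h; rw [Finset.Icc_self, Finset.sum_singleton, hz_c]; ring
      · have hc' : c = (c - 1) + 1 := by omega
        rw [hc', Finset.sum_Icc_succ_top (by omega), ← hc', hz_c,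
          hsum_leftI a (c-1) (by omega) (by omega)]
        have : ((c - 1 : ℕ) : ℤ) + 1 - a = (c:ℤ) - a := by omega
        rw [this]; ring
    have hsecond : ∑ t ∈ Finset.Ioc c b, z t = ((b:ℤ) - c) * M + ρ (b - c) := by
      rcases Nat.eq_or_lt_of_le hcb with h | h
      · subst h
        rw [Finset.Ioc_self]
        simp [hρ0]
      · rw [← Finset.Icc_add_one_left_eq_Ioc, hsum_rightI (c+1) b (by omega) (by omega)]
        have h1 : c + 1 - 1 - c = 0 := by omega
        have h2 : ((b:ℤ) + 1 - (c+1:ℕ)) = (b:ℤ) - c := by push_cast; ring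
        rw [h1, hρ0, h2]; ring
    rw [hfirst, hsecond]; ring
  refine ⟨z, hz_c, ?_, ?_⟩
  · -- positivity
    intro i h1 h2 hne
    rcases Nat.lt_trichotomy i c with h | h | h
    · rw [hz_left i h]; linarith
    · exact absurd h hne
    · have hi : i = c + (i - c) := by omega
      rw [hi, hz_right (i - c) (by omega)]
      have := hρ_nonneg (i - c)
      have := hρ_le (i - c - 1)
      simp only [hM, hP] at *
      omega
  · -- main inequalities
    intro h k h1 h2 hk1 hkl hlow hhigh j hj1 hj2 hjne
    -- rewrite the sum over Icc k l
    have hkl_split : ∑ i ∈ Finset.Icc k l, μ i = μ k + T k := by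
      rw [← Finset.Ioc_insert_left hkl, Finset.sum_insert (by simp), ← Finset.Icc_add_one_left_eq_Ioc]
    set Tk := ∑ i ∈ Finset.Icc (k+1) l, μ i with hTk
    have hTkT : T k = Tk := rfl
    set m := h - Tk with hm
    have hm1 : 1 ≤ m := by omega
    have hmμ : m ≤ μ k := by rw [hkl_split, hTkT] at hhigh; omega
    have hμkc : μ k ≤ c := hmono 1 k le_rfl hk1 hkl
    set i0 := c + 1 - m with hi0
    have hi01 : 1 ≤ i0 := by omega
    have hi0c : i0 ≤ c := by omega
    have hmh : m ≤ h := by omega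
    have hTkh : Tk < h := hlow
    have hend : i0 + h - 1 = c + Tk := by omega
    rw [hend]
    have hLHS : ∑ t ∈ Finset.Icc i0 (c + Tk), z t = ((h:ℤ) - 1) * M + ((m:ℤ) - 1) := by
      rw [hsum_midI i0 (c + Tk) hi01 hi0c (by omega), Nat.add_sub_cancel_left,
        ← hTkT, hρ_boundary k hk1 hkl]
      have e1 : ((c + Tk : ℕ) : ℤ) - i0 = (h:ℤ) - 1 := by omega
      have e2 : ((c:ℤ) - i0) = (m:ℤ) - 1 := by omega
      rw [e1, e2]; ring
    rw [hLHS]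
    have hbj : j + h - 1 = j + (h - 1) := by omega
    have hbjn : j + h - 1 ≤ n := by omega
    rcases Nat.lt_or_ge (j + h - 1) c with hB | hE
    · -- window entirely left of c
      rw [hsum_leftI j (j + h - 1) (by omega) hB]
      have e : ((j + h - 1 : ℕ) : ℤ) + 1 - j = (h:ℤ) := by omega
      rw [e]
      have eid : (h:ℤ)*(M+1) = ((h:ℤ)-1)*M + M + (h:ℤ) := by ring
      have f1 : (m:ℤ) - 1 ≤ (n:ℤ) - 1 := by omega
      have f2 : (1:ℤ) ≤ (h:ℤ) := by omega
      rw [eid]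
      simp only [hM] at *
      linarith
    · -- c ≤ j + h - 1 : either contains c (j ≤ c) or entirely right (j > c)
      rcases le_or_gt j c with hjc | hjc
      · -- contains c
        set y := j + h - 1 - c with hy
        rw [hsum_midI j (j + h - 1) hj1 hjc (by omega)]
        have e1 : ((j + h - 1 : ℕ) : ℤ) - j = (h:ℤ) - 1 := by omega
        rw [e1, ← hy]
        have hyh : y ≤ h - 1 := by omega
        have key : (m:ℤ) - 1 < ((c:ℤ) - j) + ρ y := by
          rcases hρ_bd y with h0 | h0
          · -- boundary: y = T k' for some k'
            obtain ⟨k', hk'1, hk'l, hTk'⟩ := hρ_zero y h0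
            have hyTk : y ≤ Tk := by
              rcases le_or_gt k k' with hkk | hkk
              · have := hT_anti k k' hkk
                rw [hTk'] at this; rw [← hTkT]; omega
              · -- k' < k : T k' ≥ ∑ Icc k l ≥ h, contradiction
                exfalso
                have hsub : ∑ i ∈ Finset.Icc k l, μ i ≤ T k' := by
                  exact Finset.sum_le_sum_of_subset (Finset.Icc_subset_Icc_left (by omega))
                rw [hTk'] at hsub
                omega
            have hyne : y ≠ Tk := by
              intro hcontra
              apply hjne
              omega
            rw [h0]
            omega
          · rw [h0]
            simp only [hP]
            omega
        linarith
      · -- entirely right of c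
        rw [hsum_rightI j (j + h - 1) hjc (by omega)]
        have e1 : ((j + h - 1 : ℕ) : ℤ) + 1 - j = (h:ℤ) := by omega
        rw [e1]
        have hb1 := hρ_nonneg (j + h - 1 - c)
        have hb2 := hρ_le (j - 1 - c)
        have eM : (h:ℤ) * M = ((h:ℤ) - 1) * M + M := by ring
        rw [eM]
        simp only [hM, hP] at *
        omega
end

section
/- Let n = 2m be even with m ≥ 1 and let μ = (m, m) be the partition of n with two equal parts, so that i(h) = m+1−h for 1 ≤ h ≤ m and i(h) = n+1−h for m < h ≤ n. Then the vector z ∈ ℤⁿ defined by z_i = 2 for 1 ≤ i ≤ m−1, z_m = 0, z_{m+1} = 3, z_i = 2 for m+2 ≤ i ≤ n−1, and z_n = 1, satisfies the system (IE_μ): z_m = 0; z_i > 0 for i ≠ m; and for every h ∈ {1,…,n} and every j with 1 ≤ j ≤ n+1−h and j ≠ i(h), one has Σ_{k=i(h)}^{i(h)+h−1} z_k < Σ_{k=j}^{j+h−1} z_k. -/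
/-- Prefix-sum profile of the vector `z`. -/
def fIE (m i : ℕ) : ℤ :=
  2*i - (if m ≤ i then 2 else 0) + (if m+1 ≤ i then 1 else 0) - (if 2*m ≤ i then 1 else 0)

lemma sumIE_prefix (m : ℕ) (hm : 2 ≤ m) (z : ℕ → ℤ)
    (hz1 : ∀ i, 1 ≤ i → i + 1 ≤ m → z i = 2)
    (hz2 : z m = 0)
    (hz3 : z (m + 1) = 3)
    (hz4 : ∀ i, m + 2 ≤ i → i + 1 ≤ 2*m → z i = 2)
    (hz5 : z (2*m) = 1) :
    ∀ i, i ≤ 2*m → ∑ k ∈ Finset.Icc 1 i, z k = fIE m i := by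
  intro i
  induction i with
  | zero =>
      intro _
      simp [fIE]
      omega
  | succ i ih =>
      intro hi
      rw [Finset.sum_Icc_succ_top (by omega : 1 ≤ i + 1), ih (by omega)]
      rcases (show i+1+1 ≤ m ∨ i+1 = m ∨ i+1 = m+1 ∨ (m+2 ≤ i+1 ∧ i+1+1 ≤ 2*m) ∨ i+1 = 2*m
        by omega) with h | h | h | ⟨h, h'⟩ | h
      · have hv : z (i+1) = 2 := hz1 _ (by omega) h
        unfold fIE; split_ifs <;> omega
      · have hv : z (i+1) = 0 := h ▸ hz2
        unfold fIE; split_ifs <;> omega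
      · have hv : z (i+1) = 3 := h ▸ hz3
        unfold fIE; split_ifs <;> omega
      · have hv : z (i+1) = 2 := hz4 _ h h'
        unfold fIE; split_ifs <;> omega
      · have hv : z (i+1) = 1 := h ▸ hz5
        unfold fIE; split_ifs <;> omega

lemma sumIE_interval (m : ℕ) (hm : 2 ≤ m) (z : ℕ → ℤ)
    (hz1 : ∀ i, 1 ≤ i → i + 1 ≤ m → z i = 2)
    (hz2 : z m = 0)
    (hz3 : z (m + 1) = 3)
    (hz4 : ∀ i, m + 2 ≤ i → i + 1 ≤ 2*m → z i = 2)
    (hz5 : z (2*m) = 1)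
    (a b : ℕ) (hab : a ≤ b) (hb : b ≤ 2*m) :
    ∑ k ∈ Finset.Icc (a+1) b, z k = fIE m b - fIE m a := by
  have h1 := sumIE_prefix m hm z hz1 hz2 hz3 hz4 hz5 a (by omega)
  have h2 := sumIE_prefix m hm z hz1 hz2 hz3 hz4 hz5 b hb
  have key : (∑ k ∈ Finset.Icc 1 a, z k) + ∑ k ∈ Finset.Icc (a+1) b, z k
      = ∑ k ∈ Finset.Icc 1 b, z k := by
    rw [show Finset.Icc 1 a = Finset.Ioc 0 a from rfl,
        show Finset.Icc (a+1) b = Finset.Ioc a b from (Finset.Icc_add_one_left_eq_Ioc a b),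
        show Finset.Icc 1 b = Finset.Ioc 0 b from rfl]
    exact Finset.sum_Ioc_consecutive z (Nat.zero_le a) hab
  omega

set_option maxHeartbeats 1000000 in
/-- For the two-equal-parts partition `μ = (m, m)` of `n = 2m`, where `i(h) = m+1−h` for
`h ≤ m` and `i(h) = 2m+1−h` for `h > m`, the vector
`z = (2, …, 2, 0, 3, 2, …, 2, 1)` solves the system `(IE_μ)`. -/
theorem stmt_12 (m : ℕ) (hm : 1 ≤ m) (z : ℕ → ℤ)
    (hz1 : ∀ i, 1 ≤ i → i + 1 ≤ m → z i = 2)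
    (hz2 : z m = 0)
    (hz3 : z (m + 1) = 3)
    (hz4 : ∀ i, m + 2 ≤ i → i + 1 ≤ 2*m → z i = 2)
    (hz5 : z (2*m) = 1)
    (I : ℕ → ℕ)
    (hI : ∀ h, I h = if h ≤ m then m + 1 - h else 2*m + 1 - h) :
    z m = 0
    ∧ (∀ i, 1 ≤ i → i ≤ 2*m → i ≠ m → 0 < z i)
    ∧ (∀ h j, 1 ≤ h → h ≤ 2*m → 1 ≤ j → j ≤ 2*m + 1 - h → j ≠ I h →
        (∑ k ∈ Finset.Icc (I h) (I h + h - 1), z k)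
          < ∑ k ∈ Finset.Icc j (j + h - 1), z k) := by
  rcases eq_or_lt_of_le hm with hm1 | hm2
  · exfalso
    have h12 : m + 1 = 2 * m := by omega
    rw [h12] at hz3
    omega
  have hm2 : 2 ≤ m := hm2
  refine ⟨hz2, ?_, ?_⟩
  · intro i h1 h2 h3
    rcases (show i+1 ≤ m ∨ i = m+1 ∨ (m+2 ≤ i ∧ i+1 ≤ 2*m) ∨ i = 2*m by omega)
      with h | h | ⟨h, h'⟩ | h
    · rw [hz1 i h1 h]; norm_num
    · rw [h, hz3]; norm_num
    · rw [hz4 i h h']; norm_num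
    · rw [h, hz5]; norm_num
  · intro h j hh1 hh2 hj1 hj2 hjne
    have hIv : (h ≤ m ∧ I h = m + 1 - h) ∨ (m < h ∧ I h = 2*m + 1 - h) := by
      rcases le_or_gt h m with hh | hh
      · left; exact ⟨hh, by rw [hI h, if_pos hh]⟩
      · right; exact ⟨hh, by rw [hI h, if_neg (by omega)]⟩
    have hIb : 1 ≤ I h ∧ I h + h - 1 ≤ 2*m ∧ I h ≤ 2*m + 1 - h := by omega
    have e1 : ∑ k ∈ Finset.Icc (I h) (I h + h - 1), z k
        = fIE m (I h + h - 1) - fIE m (I h - 1) := by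
      have := sumIE_interval m hm2 z hz1 hz2 hz3 hz4 hz5 (I h - 1) (I h + h - 1)
        (by omega) (by omega)
      rwa [show I h - 1 + 1 = I h by omega] at this
    have e2 : ∑ k ∈ Finset.Icc j (j + h - 1), z k
        = fIE m (j + h - 1) - fIE m (j - 1) := by
      have := sumIE_interval m hm2 z hz1 hz2 hz3 hz4 hz5 (j - 1) (j + h - 1)
        (by omega) (by omega)
      rwa [show j - 1 + 1 = j by omega] at this
    have lhs : fIE m (I h + h - 1) - fIE m (I h - 1) = 2*h - 2 := by
      rcases hIv with ⟨hh, hIe⟩ | ⟨hh, hIe⟩ <;> rw [hIe] <;> unfold fIE <;>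
        split_ifs <;> omega
    rw [e1, e2, lhs]
    rcases hIv with ⟨hh, hIe⟩ | ⟨hh, hIe⟩ <;> rw [hIe] at hjne <;> unfold fIE <;>
      split_ifs <;> omega
end

section
/- Let μ be a partition of n, let i(h) (1 ≤ h ≤ n) be as in (IE_μ), and let z = (z₁,…,zₙ) ∈ ℤⁿ be a solution of (IE_μ) all of whose entries are divisible by n+1. Define w_j := (Σ_{k=j}^{n}(n+1−k)z_k − Σ_{k=1}^{j−1} k·z_k)/(n+1) for 1 ≤ j ≤ n+1. Then each w_j is an integer, Σ_{j=1}^{n+1} w_j = 0, and w_j − w_{j+h} = Σ_{k=j}^{j+h−1} z_k for all valid j, h. Moreover, letting Λ = Σ_{i=1}^{n} E_{i,i+1} ∈ M_{n+1}(ℂ) and D(t) = diag(t^{w₁},…,t^{w_{n+1}}) for t ≠ 0, for every h ∈ {1,…,n} the matrix t^{−Σ_{k=i(h)}^{i(h)+h−1} z_k} · D(t)·Λ^h·D(t)⁻¹ converges to the matrix unit E_{i(h), i(h)+h} as t → 0 with t ≠ 0. -/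
/-- `i(h) = μ₁ + 1 − (h − Σ_{i>k} μ_i)` (for the appropriate `k`). -/
def iIdx (l : ℕ) (μ : ℕ → ℕ) (h k : ℕ) : ℕ :=
  μ 1 + 1 - (h - ∑ i ∈ Finset.Icc (k+1) l, μ i)

/-- The numerator `Σ_{k=j}^{n}(n+1−k)z_k − Σ_{k=1}^{j−1} k·z_k` of `w_j`. -/
def wNum (n : ℕ) (z : ℕ → ℤ) (j : ℕ) : ℤ :=
  (∑ k ∈ Finset.Icc j n, ((n : ℤ) + 1 - (k : ℤ)) * z k)
    - ∑ k ∈ Finset.Icc 1 (j-1), (k : ℤ) * z k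

/-- Given a solution `z` of `(IE_μ)` with all entries divisible by `n+1`, the vector `w`
with `w_j = (Σ_{k=j}^n (n+1−k)z_k − Σ_{k=1}^{j−1} k z_k)/(n+1)` is integral, sums to `0`,
satisfies `w_j − w_{j+h} = z_j(h)`, and conjugating `Λ^h` by `diag(t^{w₁},…,t^{w_{n+1}})`
and renormalizing by `t^{−z_{i(h)}(h)}` converges to the matrix unit `E_{i(h), i(h)+h}`
as `t → 0`, `t ≠ 0`. -/
theorem stmt_13 (n l : ℕ) (hn : 1 ≤ n) (hl : 1 ≤ l) (μ : ℕ → ℕ)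
    (hpos : ∀ k, 1 ≤ k → k ≤ l → 1 ≤ μ k)
    (hmono : ∀ k k', 1 ≤ k → k ≤ k' → k' ≤ l → μ k' ≤ μ k)
    (hsum : ∑ k ∈ Finset.Icc 1 l, μ k = n)
    (z : ℕ → ℤ)
    (hz0 : z (μ 1) = 0)
    (hzpos : ∀ i, 1 ≤ i → i ≤ n → i ≠ μ 1 → 0 < z i)
    (hzmin : ∀ h k, 1 ≤ h → h ≤ n → 1 ≤ k → k ≤ l →
      (∑ i ∈ Finset.Icc (k+1) l, μ i) < h → h ≤ ∑ i ∈ Finset.Icc k l, μ i →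
      ∀ j, 1 ≤ j → j ≤ n + 1 - h → j ≠ iIdx l μ h k →
        (∑ t ∈ Finset.Icc (iIdx l μ h k) (iIdx l μ h k + h - 1), z t)
          < ∑ t ∈ Finset.Icc j (j + h - 1), z t)
    (hdvd : ∀ i, 1 ≤ i → i ≤ n → ((n : ℤ) + 1) ∣ z i)
    (w : ℕ → ℤ)
    (hw : ∀ j, w j = wNum n z j / ((n : ℤ) + 1))
    (Λ : Matrix (Fin (n+1)) (Fin (n+1)) ℂ)
    (hΛ : ∀ i j : Fin (n+1), Λ i j = if (j : ℕ) = (i : ℕ) + 1 then 1 else 0) :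
    (∀ j, 1 ≤ j → j ≤ n + 1 → ((n : ℤ) + 1) ∣ wNum n z j)
    ∧ (∑ j ∈ Finset.Icc 1 (n+1), w j = 0)
    ∧ (∀ j h, 1 ≤ j → 1 ≤ h → j + h ≤ n + 1 →
        w j - w (j + h) = ∑ k ∈ Finset.Icc j (j + h - 1), z k)
    ∧ (∀ h k, 1 ≤ h → h ≤ n → 1 ≤ k → k ≤ l →
        (∑ i ∈ Finset.Icc (k+1) l, μ i) < h → h ≤ ∑ i ∈ Finset.Icc k l, μ i →
        Filter.Tendsto
          (fun t : ℂ =>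
            t ^ (-(∑ q ∈ Finset.Icc (iIdx l μ h k) (iIdx l μ h k + h - 1), z q)) •
              (Matrix.diagonal (fun a : Fin (n+1) => t ^ (w ((a : ℕ) + 1))) *
                Λ ^ h *
                (Matrix.diagonal (fun a : Fin (n+1) => t ^ (w ((a : ℕ) + 1))))⁻¹))
          (nhdsWithin 0 {0}ᶜ)
          (nhds (Matrix.of fun a b : Fin (n+1) =>
            if (a : ℕ) + 1 = iIdx l μ h k ∧ (b : ℕ) + 1 = iIdx l μ h k + h
            then 1 else 0))) := by
  have hn1 : ((n : ℤ) + 1) ≠ 0 := by positivity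
  -- Part 1: divisibility
  have part1 : ∀ j, 1 ≤ j → j ≤ n + 1 → ((n : ℤ) + 1) ∣ wNum n z j := by
    intro j hj1 hj2
    unfold wNum
    apply dvd_sub
    · refine Finset.dvd_sum fun k hk => Dvd.dvd.mul_left ?_ _
      rw [Finset.mem_Icc] at hk
      exact hdvd k (le_trans hj1 hk.1) hk.2
    · refine Finset.dvd_sum fun k hk => Dvd.dvd.mul_left ?_ _
      rw [Finset.mem_Icc] at hk
      exact hdvd k hk.1 (by omega)
  have hwmul : ∀ j, 1 ≤ j → j ≤ n + 1 → w j * ((n : ℤ) + 1) = wNum n z j := by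
    intro j hj1 hj2
    rw [hw j]
    exact Int.ediv_mul_cancel (part1 j hj1 hj2)
  -- Part 2: sum is zero
  have hsum0 : ∑ j ∈ Finset.Icc 1 (n+1), wNum n z j = 0 := by
    unfold wNum
    rw [Finset.sum_sub_distrib]
    have e1 : ∑ j ∈ Finset.Icc 1 (n+1), ∑ k ∈ Finset.Icc j n, ((n : ℤ) + 1 - (k : ℤ)) * z k
        = ∑ k ∈ Finset.Icc 1 n, ∑ j ∈ Finset.Icc 1 k, ((n : ℤ) + 1 - (k : ℤ)) * z k :=
      Finset.sum_comm' (fun x y => by simp only [Finset.mem_Icc]; omega)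
    have e2 : ∑ j ∈ Finset.Icc 1 (n+1), ∑ k ∈ Finset.Icc 1 (j-1), (k : ℤ) * z k
        = ∑ k ∈ Finset.Icc 1 n, ∑ j ∈ Finset.Icc (k+1) (n+1), (k : ℤ) * z k :=
      Finset.sum_comm' (fun x y => by simp only [Finset.mem_Icc]; omega)
    rw [e1, e2, ← Finset.sum_sub_distrib]
    apply Finset.sum_eq_zero
    intro k hk
    rw [Finset.mem_Icc] at hk
    rw [Finset.sum_const, Finset.sum_const, Nat.card_Icc, Nat.card_Icc, nsmul_eq_mul,
      nsmul_eq_mul]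
    have h1 : ((k + 1 - 1 : ℕ) : ℤ) = k := by omega
    have h2 : ((n + 1 + 1 - (k + 1) : ℕ) : ℤ) = (n : ℤ) + 1 - k := by omega
    rw [h1, h2]; ring
  have part2 : ∑ j ∈ Finset.Icc 1 (n+1), w j = 0 := by
    have : (∑ j ∈ Finset.Icc 1 (n+1), w j) * ((n : ℤ) + 1) = 0 := by
      rw [Finset.sum_mul, ← hsum0]
      refine Finset.sum_congr rfl fun j hj => ?_
      rw [Finset.mem_Icc] at hj
      exact hwmul j hj.1 hj.2
    exact (mul_eq_zero.mp this).resolve_right hn1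
  -- telescoping
  have hstep : ∀ j, 1 ≤ j → j ≤ n →
      wNum n z j - wNum n z (j+1) = ((n : ℤ) + 1) * z j := by
    intro j hj1 hj2
    unfold wNum
    have h1 : Finset.Icc j n = insert j (Finset.Icc (j+1) n) := by
      ext x; simp only [Finset.mem_Icc, Finset.mem_insert]; omega
    have h2 : Finset.Icc 1 ((j+1)-1) = insert j (Finset.Icc 1 (j-1)) := by
      ext x; simp only [Finset.mem_Icc, Finset.mem_insert]; omega
    rw [h1, h2, Finset.sum_insert (by simp), Finset.sum_insert (by simp; omega)]
    ring
  have htel : ∀ h j, 1 ≤ h → 1 ≤ j → j + h ≤ n + 1 →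
      wNum n z j - wNum n z (j+h)
        = ((n : ℤ) + 1) * ∑ k ∈ Finset.Icc j (j+h-1), z k := by
    intro h
    induction h with
    | zero => intro j h1; omega
    | succ h ih =>
      intro j _ hj1 hjh
      by_cases hh : h = 0
      · subst hh
        have : Finset.Icc j (j + 1 - 1) = {j} := by
          ext x; simp only [Finset.mem_Icc, Finset.mem_singleton]; omega
        rw [this, Finset.sum_singleton]
        exact hstep j hj1 (by omega)
      · have h1 : 1 ≤ h := by omega
        have e : wNum n z j - wNum n z (j + (h+1))
            = (wNum n z j - wNum n z (j+h)) + (wNum n z (j+h) - wNum n z (j+h+1)) := by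
          rw [show j + (h+1) = j + h + 1 from rfl]; ring
        rw [e, ih j h1 hj1 (by omega), hstep (j+h) (by omega) (by omega)]
        have hsplit : Finset.Icc j (j + (h+1) - 1)
            = insert (j+h) (Finset.Icc j (j+h-1)) := by
          ext x; simp only [Finset.mem_Icc, Finset.mem_insert]; omega
        rw [hsplit, Finset.sum_insert (by simp only [Finset.mem_Icc]; omega)]
        ring
  have part3 : ∀ j h, 1 ≤ j → 1 ≤ h → j + h ≤ n + 1 →
      w j - w (j + h) = ∑ k ∈ Finset.Icc j (j + h - 1), z k := by
    intro j h hj1 hh1 hjh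
    have key : (w j - w (j + h)) * ((n : ℤ) + 1)
        = (∑ k ∈ Finset.Icc j (j + h - 1), z k) * ((n : ℤ) + 1) := by
      rw [sub_mul, hwmul j hj1 (by omega), hwmul (j+h) (by omega) (by omega),
        htel h j hh1 hj1 hjh]
      ring
    exact mul_right_cancel₀ hn1 key
  -- Λ powers
  have hΛh : ∀ (h : ℕ) (a b : Fin (n+1)),
      (Λ ^ h) a b = if (b : ℕ) = (a : ℕ) + h then 1 else 0 := by
    intro h
    induction h with
    | zero =>
      intro a b
      simp [Matrix.one_apply, Fin.ext_iff, eq_comm]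
    | succ h ih =>
      intro a b
      rw [pow_succ, Matrix.mul_apply]
      have key : ∀ c : Fin (n+1), (Λ ^ h) a c * Λ c b
          = if ((c : ℕ) = (a : ℕ) + h ∧ (b : ℕ) = (c : ℕ) + 1) then 1 else 0 := by
        intro c
        rw [ih, hΛ]
        by_cases h1 : (c : ℕ) = (a : ℕ) + h <;> by_cases h2 : (b : ℕ) = (c : ℕ) + 1 <;>
          simp [h1, h2]
      simp_rw [key]
      by_cases hb : (b : ℕ) = (a : ℕ) + (h + 1)
      · have hc : (a : ℕ) + h < n + 1 := by have := b.isLt; omega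
        rw [Finset.sum_eq_single (⟨(a : ℕ) + h, hc⟩ : Fin (n+1))]
        · simp [hb]; omega
        · intro c _ hne
          have : ¬((c : ℕ) = (a : ℕ) + h) := fun hceq => hne (Fin.ext hceq)
          simp [this]
        · intro habs; exact absurd (Finset.mem_univ _) habs
      · rw [if_neg hb]
        apply Finset.sum_eq_zero
        intro c _
        rw [if_neg]
        rintro ⟨h1, h2⟩
        omega
  refine ⟨part1, part2, part3, ?_⟩
  -- Part 4
  intro h k hh1 hhn hk1 hkl hlt hle
  set i := iIdx l μ h k with hi
  set S := ∑ q ∈ Finset.Icc i (i + h - 1), z q with hS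
  -- bounds on i
  have hmuk : μ k ≤ μ 1 := hmono 1 k (le_refl 1) hk1 hkl
  have hsplitk : ∑ p ∈ Finset.Icc k l, μ p = μ k + ∑ p ∈ Finset.Icc (k+1) l, μ p := by
    have : Finset.Icc k l = insert k (Finset.Icc (k+1) l) := by
      ext x; simp only [Finset.mem_Icc, Finset.mem_insert]; omega
    rw [this, Finset.sum_insert (by simp only [Finset.mem_Icc]; omega)]
  have hsub : Finset.Icc (k+1) l ⊆ Finset.Icc 2 l := by
    intro x hx; rw [Finset.mem_Icc] at *; omega
  have hsplit1 : ∑ p ∈ Finset.Icc 1 l, μ p = μ 1 + ∑ p ∈ Finset.Icc 2 l, μ p := by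
    have : Finset.Icc 1 l = insert 1 (Finset.Icc 2 l) := by
      ext x; simp only [Finset.mem_Icc, Finset.mem_insert]; omega
    rw [this, Finset.sum_insert (by simp only [Finset.mem_Icc]; omega)]
  have hbig : μ 1 + ∑ p ∈ Finset.Icc (k+1) l, μ p ≤ n := by
    have := Finset.sum_le_sum_of_subset (f := μ) hsub
    omega
  have hi1 : 1 ≤ i := by
    rw [hi]; unfold iIdx; omega
  have hihn : i + h ≤ n + 1 := by
    rw [hi]; unfold iIdx; omega
  -- strict inequality for other rows
  have hSz : ∀ a : ℕ, 1 ≤ a → a + h ≤ n + 1 → a ≠ i →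
      S < ∑ q ∈ Finset.Icc a (a + h - 1), z q :=
    fun a ha1 hah hne => hzmin h k hh1 hhn hk1 hkl hlt hle a ha1 (by omega) hne
  -- the clean limit function
  set g : ℂ → Matrix (Fin (n+1)) (Fin (n+1)) ℂ := fun t =>
    Matrix.of fun a b : Fin (n+1) =>
      if (b : ℕ) = (a : ℕ) + h
      then t ^ (w ((a : ℕ) + 1) - w ((a : ℕ) + 1 + h) - S) else 0 with hg
  have heq : ∀ t : ℂ, t ≠ 0 →
      (t ^ (-S) •
        (Matrix.diagonal (fun a : Fin (n+1) => t ^ (w ((a : ℕ) + 1))) *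
          Λ ^ h *
          (Matrix.diagonal (fun a : Fin (n+1) => t ^ (w ((a : ℕ) + 1))))⁻¹)) = g t := by
    intro t ht
    have hDinv : (Matrix.diagonal (fun a : Fin (n+1) => t ^ (w ((a : ℕ) + 1))))⁻¹
        = Matrix.diagonal (fun a : Fin (n+1) => t ^ (-(w ((a : ℕ) + 1)))) := by
      apply Matrix.inv_eq_right_inv
      rw [Matrix.diagonal_mul_diagonal]
      have hone : (fun a : Fin (n+1) => t ^ (w ((a : ℕ) + 1)) * t ^ (-(w ((a : ℕ) + 1))))
          = fun _ => (1 : ℂ) := funext fun a => by rw [← zpow_add₀ ht]; simp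
      rw [hone, Matrix.diagonal_one]
    rw [hDinv]
    ext a b
    rw [Matrix.smul_apply, Matrix.mul_apply]
    have hterm : ∀ c : Fin (n+1),
        (Matrix.diagonal (fun a : Fin (n+1) => t ^ (w ((a : ℕ) + 1))) * Λ ^ h) a c *
          (Matrix.diagonal (fun a : Fin (n+1) => t ^ (-(w ((a : ℕ) + 1))))) c b
        = if c = b then t ^ (w ((a : ℕ) + 1)) * (Λ ^ h) a b * t ^ (-(w ((b : ℕ) + 1)))
          else 0 := by
      intro c
      rw [Matrix.diagonal_mul, Matrix.diagonal_apply]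
      by_cases hcb : c = b
      · subst hcb; simp
      · simp [hcb]
    simp_rw [hterm]
    rw [Finset.sum_ite_eq' Finset.univ b
      (fun _ => t ^ (w ((a : ℕ) + 1)) * (Λ ^ h) a b * t ^ (-(w ((b : ℕ) + 1))))]
    simp only [Finset.mem_univ, if_true]
    rw [hΛh h a b, hg]
    simp only [Matrix.of_apply]
    by_cases hb : (b : ℕ) = (a : ℕ) + h
    · rw [if_pos hb, if_pos hb]
      have hbw : w ((b : ℕ) + 1) = w ((a : ℕ) + 1 + h) := by rw [hb]; ring_nf
      rw [hbw, smul_eq_mul, mul_one, ← zpow_add₀ ht, ← zpow_add₀ ht]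
      congr 1
      ring
    · rw [if_neg hb, if_neg hb]
      simp
  -- now prove tendsto of g, transfer by eventual equality
  have hgt : Filter.Tendsto g (nhdsWithin 0 {0}ᶜ)
      (nhds (Matrix.of fun a b : Fin (n+1) =>
        if (a : ℕ) + 1 = i ∧ (b : ℕ) + 1 = i + h then 1 else 0)) := by
    refine tendsto_pi_nhds.2 fun a => tendsto_pi_nhds.2 fun b => ?_
    simp only [hg, Matrix.of_apply]
    by_cases hb : (b : ℕ) = (a : ℕ) + h
    · simp only [if_pos hb]
      by_cases hai : (a : ℕ) + 1 = i
      · have hcond : ((a : ℕ) + 1 = i ∧ (b : ℕ) + 1 = i + h) := ⟨hai, by omega⟩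
        rw [if_pos hcond]
        have hexp : w ((a : ℕ) + 1) - w ((a : ℕ) + 1 + h) - S = 0 := by
          rw [part3 ((a : ℕ) + 1) h (by omega) hh1 (by omega)]
          rw [hai, hS]
          simp
        simp_rw [hexp]
        simpa using tendsto_const_nhds
      · have hcond : ¬((a : ℕ) + 1 = i ∧ (b : ℕ) + 1 = i + h) := fun hc => hai hc.1
        rw [if_neg hcond]
        have hgt0 : 0 < w ((a : ℕ) + 1) - w ((a : ℕ) + 1 + h) - S := by
          rw [part3 ((a : ℕ) + 1) h (by omega) hh1 (by have := b.isLt; omega)]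
          have := hSz ((a : ℕ) + 1) (by omega) (by have := b.isLt; omega) hai
          omega
        set e := w ((a : ℕ) + 1) - w ((a : ℕ) + 1 + h) - S with he
        have hfn : (fun t : ℂ => t ^ e) = fun t : ℂ => t ^ (e.toNat) := by
          funext t
          rw [← zpow_natCast, Int.toNat_of_nonneg hgt0.le]
        rw [hfn]
        have h0 : ((0 : ℂ)) ^ (e.toNat) = 0 := zero_pow (by omega)
        have := (continuous_pow (M := ℂ) e.toNat).tendsto 0
        rw [h0] at this
        exact this.mono_left nhdsWithin_le_nhds
    · simp only [if_neg hb]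
      have hcond : ¬((a : ℕ) + 1 = i ∧ (b : ℕ) + 1 = i + h) := by
        rintro ⟨h1, h2⟩; omega
      rw [if_neg hcond]
      exact tendsto_const_nhds
  refine Filter.Tendsto.congr' ?_ hgt
  filter_upwards [self_mem_nhdsWithin] with t ht
  exact (heq t ht).symm
end

section
/- Let n ≥ 2 and let ε₁,…,εₙ be the standard basis of ℤⁿ. Let Δ⁺ = {ε_i : 1 ≤ i ≤ n} ∪ {ε_i − ε_j : i < j} ∪ {ε_i + ε_j : i < j} (the positive roots of type Bₙ) and Δ = Δ⁺ ∪ (−Δ⁺). Suppose S ⊆ Δ⁺ is a set with exactly n elements such that (i) for all α ∈ S and β ∈ Δ⁺ with α + β ∈ Δ one has α + β ∈ S, and (ii) for all α, β ∈ S, α + β ∉ Δ. Then either every element of S is of the form ε_i + ε_j with i < j, or S = {ε₁} ∪ {ε₁ + ε_j : 2 ≤ j ≤ n}. -/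
/-- Classification of the root sets of `n`-dimensional abelian ideals of a Borel
subalgebra in type `Bₙ`: such a set `S` either consists entirely of roots
`ε_i + ε_j` (`i < j`), or equals `{ε₁} ∪ {ε₁ + ε_j : 2 ≤ j ≤ n}`. -/
theorem stmt_14 (n : ℕ) (hn : 2 ≤ n)
    (e : Fin n → (Fin n → ℤ)) (he : ∀ i, e i = Pi.single i 1)
    (Δp : Set (Fin n → ℤ))
    (hΔp : Δp = {v | ∃ i : Fin n, v = e i}
        ∪ {v | ∃ i j : Fin n, i < j ∧ v = e i - e j}
        ∪ {v | ∃ i j : Fin n, i < j ∧ v = e i + e j})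
    (Δ : Set (Fin n → ℤ)) (hΔ : Δ = Δp ∪ {v | -v ∈ Δp})
    (S : Finset (Fin n → ℤ)) (hcard : S.card = n)
    (hSsub : ↑S ⊆ Δp)
    (hideal : ∀ α ∈ S, ∀ β ∈ Δp, α + β ∈ Δ → α + β ∈ S)
    (habel : ∀ α ∈ S, ∀ β ∈ S, α + β ∉ Δ) :
    (∀ α ∈ S, ∃ i j : Fin n, i < j ∧ α = e i + e j)
    ∨ (↑S : Set (Fin n → ℤ)) =
        {e ⟨0, by omega⟩} ∪ {v | ∃ j : Fin n, 1 ≤ (j : ℕ) ∧ v = e ⟨0, by omega⟩ + e j} := by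
  classical
  by_cases hlong : ∀ α ∈ S, ∃ i j : Fin n, i < j ∧ α = e i + e j
  · exact Or.inl hlong
  right
  push_neg at hlong
  obtain ⟨α, hαS, hαnl⟩ := hlong
  have hev : ∀ i k : Fin n, e i k = if k = i then 1 else 0 := by
    intro i k; rw [he, Pi.single_apply]
  have hΔ1 : ∀ i : Fin n, e i ∈ Δp := by
    intro i; rw [hΔp]; exact Or.inl (Or.inl ⟨i, rfl⟩)
  have hΔ2 : ∀ i j : Fin n, i < j → e i - e j ∈ Δp := by
    intro i j h; rw [hΔp]; exact Or.inl (Or.inr ⟨i, j, h, rfl⟩)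
  have hΔ3 : ∀ i j : Fin n, i < j → e i + e j ∈ Δp := by
    intro i j h; rw [hΔp]; exact Or.inr ⟨i, j, h, rfl⟩
  have hΔpΔ : Δp ⊆ Δ := by rw [hΔ]; exact Set.subset_union_left
  -- Step 1: some `e i` lies in `S`.
  have hex : ∃ i : Fin n, e i ∈ S := by
    have hα := hSsub hαS
    rw [hΔp] at hα
    rcases hα with (⟨i, hi⟩ | ⟨i, j, hij, hij'⟩) | ⟨i, j, hij, hij'⟩
    · exact ⟨i, by rwa [← hi]⟩
    · refine ⟨i, ?_⟩
      have hsum : α + e j = e i := by rw [hij']; abel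
      have h1 := hideal α hαS (e j) (hΔ1 j) (by rw [hsum]; exact hΔpΔ (hΔ1 i))
      rwa [hsum] at h1
    · exact absurd hij' (hαnl i j hij)
  obtain ⟨i, hiS⟩ := hex
  set z : Fin n := ⟨0, by omega⟩ with hz
  -- Step 2: necessarily `i = z`.
  have hi0 : i = z := by
    by_contra hne
    have hvz : (i : ℕ) ≠ 0 := fun h => hne (Fin.ext h)
    have hzi : z < i := by
      rw [Fin.lt_def]; simp only [hz]; omega
    have hsum : e i + (e z - e i) = e z := by abel
    have hzS : e z ∈ S := by
      have h1 := hideal (e i) hiS (e z - e i) (hΔ2 z i hzi)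
        (by rw [hsum]; exact hΔpΔ (hΔ1 z))
      rwa [hsum] at h1
    have hmem : e i + e z ∈ Δ := by
      have hcomm : e i + e z = e z + e i := by abel
      rw [hcomm]; exact hΔpΔ (hΔ3 z i hzi)
    exact habel (e i) hiS (e z) hzS hmem
  rw [hi0] at hiS
  have hmem : ∀ j : Fin n, j ≠ z → e z + e j ∈ S := by
    intro j hj
    have hzj : z < j := by
      have : (j : ℕ) ≠ 0 := fun h => hj (Fin.ext h)
      rw [Fin.lt_def]; simp only [hz]; omega
    exact hideal (e z) hiS (e j) (hΔ1 j) (hΔpΔ (hΔ3 z j hzj))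
  set f : Fin n → (Fin n → ℤ) := fun j => if j = z then e z else e z + e j with hf
  have hfS : ∀ j, f j ∈ S := by
    intro j
    by_cases h : j = z
    · simpa [hf, h] using hiS
    · simpa [hf, h] using hmem j h
  have hinj : Function.Injective f := by
    intro a b hab
    by_cases ha : a = z <;> by_cases hb : b = z
    · rw [ha, hb]
    · exfalso
      rw [hf] at hab; simp only [if_pos ha, if_neg hb] at hab
      have hc := congrFun hab b
      simp only [Pi.add_apply, hev] at hc
      simp [hb] at hc
    · exfalso
      rw [hf] at hab; simp only [if_neg ha, if_pos hb] at hab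
      have hc := congrFun hab a
      simp only [Pi.add_apply, hev] at hc
      simp [ha] at hc
    · rw [hf] at hab; simp only [if_neg ha, if_neg hb] at hab
      have h2 : e a = e b := add_left_cancel hab
      have hc := congrFun h2 a
      simp only [hev, if_pos rfl] at hc
      by_contra hne
      rw [if_neg (fun hh : a = b => hne hh)] at hc
      exact absurd hc (by norm_num)
  have himg : Finset.image f Finset.univ = S := by
    apply Finset.eq_of_subset_of_card_le
    · intro x hx
      simp only [Finset.mem_image, Finset.mem_univ, true_and] at hx
      obtain ⟨j, rfl⟩ := hx
      exact hfS j
    · rw [Finset.card_image_of_injective _ hinj, Finset.card_univ, Fintype.card_fin, hcard]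
  ext v
  simp only [Set.mem_union, Set.mem_singleton_iff, Set.mem_setOf_eq]
  rw [← himg]
  simp only [Finset.coe_image, Finset.coe_univ, Set.image_univ, Set.mem_range]
  constructor
  · rintro ⟨j, rfl⟩
    by_cases h : j = z
    · left; simp [hf, h]
    · right
      refine ⟨j, ?_, ?_⟩
      · exact Nat.one_le_iff_ne_zero.mpr (fun hh => h (Fin.ext hh))
      · simp [hf, h]
  · rintro (rfl | ⟨j, hj1, rfl⟩)
    · exact ⟨z, by simp [hf]⟩
    · have hjz : j ≠ z := by
        intro hh; rw [hh] at hj1; simp [hz] at hj1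
      exact ⟨j, by simp [hf, hjz]⟩
end

section
/- Let n ≥ 2 and let ε₁,…,εₙ be the standard basis of ℤⁿ. Let Δ⁺ = {2ε_i : 1 ≤ i ≤ n} ∪ {ε_i − ε_j : i < j} ∪ {ε_i + ε_j : i < j} (the positive roots of type Cₙ) and Δ = Δ⁺ ∪ (−Δ⁺). Suppose S ⊆ Δ⁺ is a set with exactly n elements such that (i) for all α ∈ S and β ∈ Δ⁺ with α + β ∈ Δ one has α + β ∈ S, and (ii) for all α, β ∈ S, α + β ∉ Δ. Then every element of S is of the form ε_i + ε_j with i ≤ j (that is, of the form ε_i + ε_j with i < j or 2ε_i). -/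
/-- Classification of the root sets of `n`-dimensional abelian ideals of a Borel
subalgebra in type `Cₙ`: such a set `S` consists entirely of roots `ε_i + ε_j` with
`i ≤ j` (i.e. `ε_i + ε_j` with `i < j`, or `2ε_i`). -/
theorem stmt_15 (n : ℕ) (hn : 2 ≤ n)
    (e : Fin n → (Fin n → ℤ)) (he : ∀ i, e i = Pi.single i 1)
    (Δp : Set (Fin n → ℤ))
    (hΔp : Δp = {v | ∃ i : Fin n, v = e i + e i}
        ∪ {v | ∃ i j : Fin n, i < j ∧ v = e i - e j}
        ∪ {v | ∃ i j : Fin n, i < j ∧ v = e i + e j})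
    (Δ : Set (Fin n → ℤ)) (hΔ : Δ = Δp ∪ {v | -v ∈ Δp})
    (S : Finset (Fin n → ℤ)) (hcard : S.card = n)
    (hSsub : ↑S ⊆ Δp)
    (hideal : ∀ α ∈ S, ∀ β ∈ Δp, α + β ∈ Δ → α + β ∈ S)
    (habel : ∀ α ∈ S, ∀ β ∈ S, α + β ∉ Δ) :
    ∀ α ∈ S, ∃ i j : Fin n, i ≤ j ∧ α = e i + e j := by
  intro α hα
  have hαΔ := hSsub hα
  rw [hΔp] at hαΔ
  rcases hαΔ with (⟨i, hi⟩ | ⟨i, j, hij, hv⟩) | ⟨i, j, hij, hv⟩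
  · exact ⟨i, i, le_refl i, hi⟩
  · exfalso
    have hβ : e j + e j ∈ Δp := by rw [hΔp]; exact Or.inl (Or.inl ⟨j, rfl⟩)
    have hsum : α + (e j + e j) = e i + e j := by rw [hv]; abel
    have hsumΔp : e i + e j ∈ Δp := by rw [hΔp]; exact Or.inr ⟨i, j, hij, rfl⟩
    have hγ : e i + e j ∈ S := by
      have := hideal α hα (e j + e j) hβ (by rw [hsum, hΔ]; exact Or.inl hsumΔp)
      rwa [hsum] at this
    have h2i : α + (e i + e j) ∈ Δ := by
      have heq : α + (e i + e j) = e i + e i := by rw [hv]; abel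
      rw [heq, hΔ, hΔp]
      exact Or.inl (Or.inl (Or.inl ⟨i, rfl⟩))
    exact habel α hα _ hγ h2i
  · exact ⟨i, j, le_of_lt hij, hv⟩
end

section
/- Let n ≥ 4 and let ε₁,…,εₙ be the standard basis of ℤⁿ. Let Δ⁺ = {ε_i − ε_j : i < j} ∪ {ε_i + ε_j : i < j} (the positive roots of type Dₙ) and Δ = Δ⁺ ∪ (−Δ⁺). Suppose S ⊆ Δ⁺ is a set with exactly n elements such that (i) for all α ∈ S and β ∈ Δ⁺ with α + β ∈ Δ one has α + β ∈ S, and (ii) for all α, β ∈ S, α + β ∉ Δ. Then one of the following holds: every element of S is of the form ε_i + ε_j with i < j; or S = {ε₁ − εₙ} ∪ {ε₁ + ε_j : 2 ≤ j ≤ n}; or S = {ε₂ + ε₃, ε₁ − εₙ} ∪ {ε₁ + ε_j : 2 ≤ j ≤ n−1}. -/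
lemma s16_ev {n : ℕ} {e : Fin n → (Fin n → ℤ)} (he : ∀ i, e i = Pi.single i 1)
    (i k : Fin n) : e i k = if k = i then 1 else 0 := by
  rw [he, Pi.single_apply]

lemma s16_einj {n : ℕ} {e : Fin n → (Fin n → ℤ)} (he : ∀ i, e i = Pi.single i 1)
    {a b : Fin n} (h : e a = e b) : a = b := by
  have h1 := congrFun h a
  simp only [s16_ev he, if_true] at h1
  split_ifs at h1 with hh
  · exact hh
  · omega

lemma s16_Lds {n : ℕ} {e : Fin n → (Fin n → ℤ)} (he : ∀ i, e i = Pi.single i 1)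
    {a b c d : Fin n} (hab : a ≠ b) : e a - e b ≠ e c + e d := by
  intro h
  have h1 := congrFun h b
  simp only [Pi.sub_apply, Pi.add_apply, s16_ev he, if_true] at h1
  split_ifs at h1 <;> first | omega | simp_all

lemma s16_Ldd {n : ℕ} {e : Fin n → (Fin n → ℤ)} (he : ∀ i, e i = Pi.single i 1)
    {a b c d : Fin n} (hab : a ≠ b) (hcd : c ≠ d) (h : e a - e b = e c - e d) :
    a = c ∧ b = d := by
  have h1 := congrFun h a
  have h2 := congrFun h b
  simp only [Pi.sub_apply, s16_ev he, if_true] at h1 h2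
  split_ifs at h1 h2 <;>
    first | exact ⟨by assumption, by assumption⟩ | omega | simp_all

lemma s16_Lss {n : ℕ} {e : Fin n → (Fin n → ℤ)} (he : ∀ i, e i = Pi.single i 1)
    {a b c d : Fin n} (hab : a ≠ b) (hcd : c ≠ d) (h : e a + e b = e c + e d) :
    (a = c ∧ b = d) ∨ (a = d ∧ b = c) := by
  have h1 := congrFun h a
  have h2 := congrFun h b
  simp only [Pi.add_apply, s16_ev he, if_true] at h1 h2
  split_ifs at h1 h2 <;>
    first
      | exact Or.inl ⟨by assumption, by assumption⟩
      | exact Or.inr ⟨by assumption, by assumption⟩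
      | omega
      | simp_all

/-- Classification of the root sets of `n`-dimensional abelian ideals of a Borel
subalgebra in type `Dₙ` (`n ≥ 4`): such a set `S` either consists entirely of roots
`ε_i + ε_j` (`i < j`), or equals `{ε₁ − εₙ} ∪ {ε₁ + ε_j : 2 ≤ j ≤ n}`, or equals
`{ε₂ + ε₃, ε₁ − εₙ} ∪ {ε₁ + ε_j : 2 ≤ j ≤ n−1}`. -/
theorem stmt_16 (n : ℕ) (hn : 4 ≤ n)
    (e : Fin n → (Fin n → ℤ)) (he : ∀ i, e i = Pi.single i 1)
    (Δp : Set (Fin n → ℤ))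
    (hΔp : Δp = {v | ∃ i j : Fin n, i < j ∧ v = e i - e j}
        ∪ {v | ∃ i j : Fin n, i < j ∧ v = e i + e j})
    (Δ : Set (Fin n → ℤ)) (hΔ : Δ = Δp ∪ {v | -v ∈ Δp})
    (S : Finset (Fin n → ℤ)) (hcard : S.card = n)
    (hSsub : ↑S ⊆ Δp)
    (hideal : ∀ α ∈ S, ∀ β ∈ Δp, α + β ∈ Δ → α + β ∈ S)
    (habel : ∀ α ∈ S, ∀ β ∈ S, α + β ∉ Δ) :
    (∀ α ∈ S, ∃ i j : Fin n, i < j ∧ α = e i + e j)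
    ∨ (↑S : Set (Fin n → ℤ)) =
        {e ⟨0, by omega⟩ - e ⟨n-1, by omega⟩}
          ∪ {v | ∃ j : Fin n, 1 ≤ (j : ℕ) ∧ v = e ⟨0, by omega⟩ + e j}
    ∨ (↑S : Set (Fin n → ℤ)) =
        ({e ⟨1, by omega⟩ + e ⟨2, by omega⟩,
          e ⟨0, by omega⟩ - e ⟨n-1, by omega⟩} : Set (Fin n → ℤ))
          ∪ {v | ∃ j : Fin n, 1 ≤ (j : ℕ) ∧ (j : ℕ) ≤ n - 2 ∧
              v = e ⟨0, by omega⟩ + e j} := by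
  classical
  by_cases hall : ∀ α ∈ S, ∃ i j : Fin n, i < j ∧ α = e i + e j
  · exact Or.inl hall
  push_neg at hall
  obtain ⟨α, hαS, hαns⟩ := hall
  have hαΔp := hSsub hαS
  rw [hΔp] at hαΔp
  obtain ⟨a, b, hab, rfl⟩ : ∃ i j : Fin n, i < j ∧ α = e i - e j := by
    rcases hαΔp with ⟨i, j, hij, h⟩ | ⟨i, j, hij, h⟩
    · exact ⟨i, j, hij, h⟩
    · exact absurd h (hαns i j hij)
  clear hαns
  -- basic membership helpers
  have hmem_sum : ∀ {i j : Fin n}, i ≠ j → e i + e j ∈ Δp := by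
    intro i j hij
    rw [hΔp]
    rcases lt_or_gt_of_ne hij with h | h
    · exact Or.inr ⟨i, j, h, rfl⟩
    · exact Or.inr ⟨j, i, h, by rw [add_comm]⟩
  have hmem_diff : ∀ {i j : Fin n}, i < j → e i - e j ∈ Δp := by
    intro i j h
    rw [hΔp]
    exact Or.inl ⟨i, j, h, rfl⟩
  have hsubΔ : Δp ⊆ Δ := by rw [hΔ]; exact Set.subset_union_left
  have step : ∀ γ ∈ S, ∀ β ∈ Δp, ∀ δ ∈ Δp, γ + β = δ → δ ∈ S := by
    intro γ hγ β hβ δ hδ hsum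
    have := hideal γ hγ β hβ (by rw [hsum]; exact hsubΔ hδ)
    rwa [hsum] at this
  -- sums attached to a difference root
  have hsum_of_diff : ∀ a b : Fin n, a < b → e a - e b ∈ S →
      ∀ c : Fin n, c ≠ a → c ≠ b → e a + e c ∈ S := by
    intro a b hab hS c hca hcb
    refine step _ hS (e b + e c) (hmem_sum (fun h => hcb h.symm)) _
      (hmem_sum (Ne.symm hca)) (by ring)
  have hn1 : n - 1 < n := by omega
  set w : Fin n := ⟨n - 1, hn1⟩ with hwdef
  -- any difference root in S has second index n-1
  have keyB : ∀ a b : Fin n, a < b → e a - e b ∈ S → b = w := by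
    intro a b hab hbS
    by_contra hbw
    have hbw' : (b : ℕ) < n - 1 := by
      have := b.isLt
      have : (b : ℕ) ≠ n - 1 := fun h => hbw (Fin.ext h)
      omega
    have hbw2 : b < w := by
      rw [Fin.lt_def]; exact hbw'
    have haw : a < w := lt_trans hab hbw2
    have h1 : e a - e w ∈ S :=
      step _ hbS (e b - e w) (hmem_diff hbw2) _ (hmem_diff haw) (by ring)
    have h2 : e a + e b ∈ S :=
      step _ h1 (e b + e w) (hmem_sum (ne_of_lt hbw2)) _ (hmem_sum (ne_of_lt hab)) (by ring)
    have hT2 : ∀ c : Fin n, c ≠ a → e a + e c ∈ S := by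
      intro c hca
      by_cases hcb : c = b
      · subst hcb; exact h2
      · exact hsum_of_diff a b hab hbS c hca hcb
    set I : Finset (Fin n → ℤ) :=
      (Finset.univ.erase a).image (fun c => e a + e c) with hIdef
    have hIcard : I.card = n - 1 := by
      rw [hIdef, Finset.card_image_of_injOn, Finset.card_erase_of_mem (Finset.mem_univ a),
        Finset.card_univ, Fintype.card_fin]
      intro c _ c' _ h
      exact s16_einj he (add_left_cancel h)
    have hnm1 : e a - e w ∉ I := by
      intro hmem
      rw [hIdef, Finset.mem_image] at hmem
      obtain ⟨c, _, hcE⟩ := hmem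
      exact s16_Lds he (ne_of_lt haw) hcE.symm
    have hnm2 : e a - e b ∉ insert (e a - e w) I := by
      intro hmem
      rcases Finset.mem_insert.mp hmem with h | h
      · exact hbw ((s16_Ldd he (ne_of_lt hab) (ne_of_lt haw) h).2)
      · rw [hIdef, Finset.mem_image] at h
        obtain ⟨c, _, hcE⟩ := h
        exact s16_Lds he (ne_of_lt hab) hcE.symm
    have hTS : insert (e a - e b) (insert (e a - e w) I) ⊆ S := by
      intro v hv
      rcases Finset.mem_insert.mp hv with rfl | hv
      · exact hbS
      rcases Finset.mem_insert.mp hv with rfl | hv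
      · exact h1
      rw [hIdef, Finset.mem_image] at hv
      obtain ⟨c, hc, rfl⟩ := hv
      exact hT2 c (Finset.mem_erase.mp hc).1
    have hle := Finset.card_le_card hTS
    rw [Finset.card_insert_of_notMem hnm2,
      Finset.card_insert_of_notMem hnm1, hIcard, hcard] at hle
    omega
  have hn0 : 0 < n := by omega
  set z : Fin n := ⟨0, hn0⟩ with hzdef
  have hzw : z < w := by rw [Fin.lt_def]; simp [hzdef, hwdef]; omega
  -- any difference root in S has first index 0
  have keyA : ∀ a b : Fin n, a < b → e a - e b ∈ S → a = z := by
    intro a b hab hbS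
    by_contra ha0
    have hb : b = w := keyB a b hab hbS
    subst hb
    have hza : z < a := by
      rw [Fin.lt_def]
      have : (a : ℕ) ≠ 0 := fun h => ha0 (Fin.ext h)
      simp [hzdef]; omega
    have hz1 : e z - e w ∈ S :=
      step _ hbS (e z - e a) (hmem_diff hza) _ (hmem_diff hzw) (by ring)
    -- pick c distinct from z, a, w
    have hne : ((((Finset.univ : Finset (Fin n)).erase z).erase a).erase w).Nonempty := by
      rw [← Finset.card_pos]
      have e1 := Finset.pred_card_le_card_erase
        (s := (((Finset.univ : Finset (Fin n)).erase z).erase a)) (a := w)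
      have e2 := Finset.pred_card_le_card_erase
        (s := ((Finset.univ : Finset (Fin n)).erase z)) (a := a)
      have e3 := Finset.pred_card_le_card_erase
        (s := (Finset.univ : Finset (Fin n))) (a := z)
      rw [Finset.card_univ, Fintype.card_fin] at e3
      omega
    obtain ⟨c, hc⟩ := hne
    simp only [Finset.mem_erase, Finset.mem_univ, and_true] at hc
    obtain ⟨hcw, hca, hcz⟩ := hc
    have hX : e z + e c ∈ S := hsum_of_diff z w hzw hz1 c hcz hcw
    set I : Finset (Fin n → ℤ) :=
      ((Finset.univ.erase a).erase w).image (fun c => e a + e c) with hIdef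
    have hIS : ∀ v ∈ I, v ∈ S := by
      intro v hv
      rw [hIdef, Finset.mem_image] at hv
      obtain ⟨d, hd, rfl⟩ := hv
      simp only [Finset.mem_erase, Finset.mem_univ] at hd
      exact hsum_of_diff a w hab hbS d hd.2.1 hd.1
    have hIcard : I.card = n - 2 := by
      have hinj : Set.InjOn (fun c => e a + e c) ((Finset.univ.erase a).erase w) := by
        intro d _ d' _ h
        exact s16_einj he (add_left_cancel h)
      rw [hIdef, Finset.card_image_of_injOn hinj,
        Finset.card_erase_of_mem
          (by rw [Finset.mem_erase]; exact ⟨Ne.symm (ne_of_lt hab), Finset.mem_univ w⟩),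
        Finset.card_erase_of_mem (Finset.mem_univ a), Finset.card_univ, Fintype.card_fin]
      omega
    have hm1 : e a - e w ∉ I := by
      intro hmem
      rw [hIdef, Finset.mem_image] at hmem
      obtain ⟨d, _, hdE⟩ := hmem
      exact s16_Lds he (ne_of_lt hab) hdE.symm
    have hm2 : e z - e w ∉ insert (e a - e w) I := by
      intro hmem
      rcases Finset.mem_insert.mp hmem with h | h
      · exact (ne_of_lt hza) (s16_Ldd he (ne_of_lt hzw) (ne_of_lt hab) h).1
      · rw [hIdef, Finset.mem_image] at h
        obtain ⟨d, _, hdE⟩ := h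
        exact s16_Lds he (ne_of_lt hzw) hdE.symm
    have hm3 : e z + e c ∉ insert (e z - e w) (insert (e a - e w) I) := by
      intro hmem
      rcases Finset.mem_insert.mp hmem with h | hmem
      · exact s16_Lds he (ne_of_lt hzw) h.symm
      rcases Finset.mem_insert.mp hmem with h | h
      · exact s16_Lds he (ne_of_lt hab) h.symm
      rw [hIdef, Finset.mem_image] at h
      obtain ⟨d, hd, hdE⟩ := h
      simp only [Finset.mem_erase, Finset.mem_univ] at hd
      rcases s16_Lss he (Ne.symm hd.2.1) (Ne.symm hcz) hdE with h | h
      · exact ha0 h.1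
      · exact hca h.1.symm
    have hTS : insert (e z + e c) (insert (e z - e w) (insert (e a - e w) I)) ⊆ S := by
      intro v hv
      rcases Finset.mem_insert.mp hv with rfl | hv
      · exact hX
      rcases Finset.mem_insert.mp hv with rfl | hv
      · exact hz1
      rcases Finset.mem_insert.mp hv with rfl | hv
      · exact hbS
      exact hIS v hv
    have hle := Finset.card_le_card hTS
    rw [Finset.card_insert_of_notMem hm3, Finset.card_insert_of_notMem hm2,
      Finset.card_insert_of_notMem hm1, hIcard, hcard] at hle
    omega
  -- our difference root is e z - e w
  obtain rfl : a = z := keyA a b hab hαS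
  obtain rfl : b = w := keyB z b hab hαS
  have hzval : (z:ℕ) = 0 := rfl
  have hwval : (w:ℕ) = n - 1 := rfl
  have hvz : ∀ c : Fin n, c ≠ z ↔ 1 ≤ (c:ℕ) := by
    intro c; rw [Ne, Fin.ext_iff]; omega
  have hvw : ∀ c : Fin n, c ≠ w ↔ (c:ℕ) ≤ n - 2 := by
    intro c; rw [Ne, Fin.ext_iff]; have := c.isLt; omega
  set K : Finset (Fin n → ℤ) :=
    ((Finset.univ.erase z).erase w).image (fun c => e z + e c) with hKdef
  have hKS : ∀ v ∈ K, v ∈ S := by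
    intro v hv
    rw [hKdef, Finset.mem_image] at hv
    obtain ⟨d, hd, rfl⟩ := hv
    simp only [Finset.mem_erase, Finset.mem_univ] at hd
    exact hsum_of_diff z w hzw hαS d hd.2.1 hd.1
  have hKcard : K.card = n - 2 := by
    have hinj : Set.InjOn (fun c => e z + e c) ((Finset.univ.erase z).erase w) := by
      intro d _ d' _ h
      exact s16_einj he (add_left_cancel h)
    rw [hKdef, Finset.card_image_of_injOn hinj,
      Finset.card_erase_of_mem
        (by rw [Finset.mem_erase]; exact ⟨Ne.symm (ne_of_lt hzw), Finset.mem_univ w⟩),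
      Finset.card_erase_of_mem (Finset.mem_univ z), Finset.card_univ, Fintype.card_fin]
    omega
  have hm1 : e z - e w ∉ K := by
    intro hmem
    rw [hKdef, Finset.mem_image] at hmem
    obtain ⟨d, _, hdE⟩ := hmem
    exact s16_Lds he (ne_of_lt hzw) hdE.symm
  set F0 : Finset (Fin n → ℤ) := insert (e z - e w) K with hF0def
  have hF0S : F0 ⊆ S := by
    intro v hv
    rcases Finset.mem_insert.mp hv with rfl | hv
    · exact hαS
    · exact hKS v hv
  have hF0card : F0.card = n - 1 := by
    rw [hF0def, Finset.card_insert_of_notMem hm1, hKcard]; omega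
  obtain ⟨x, hxS, hxF0⟩ : ∃ x ∈ S, x ∉ F0 := by
    by_contra h
    push_neg at h
    have := Finset.card_le_card (fun v hv => h v hv)
    rw [hcard, hF0card] at this
    omega
  have hSx : insert x F0 = S := by
    apply Finset.eq_of_subset_of_card_le
    · intro v hv
      rcases Finset.mem_insert.mp hv with rfl | hv
      · exact hxS
      · exact hF0S hv
    · rw [Finset.card_insert_of_notMem hxF0, hF0card, hcard]; omega
  have hmemF0 : ∀ v, v ∈ F0 ↔
      v = e z - e w ∨ ∃ c : Fin n, c ≠ z ∧ c ≠ w ∧ v = e z + e c := by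
    intro v
    rw [hF0def, Finset.mem_insert, hKdef, Finset.mem_image]
    constructor
    · rintro (rfl | ⟨c, hc, rfl⟩)
      · exact Or.inl rfl
      · simp only [Finset.mem_erase, Finset.mem_univ] at hc
        exact Or.inr ⟨c, hc.2.1, hc.1, rfl⟩
    · rintro (rfl | ⟨c, h1, h2, rfl⟩)
      · exact Or.inl rfl
      · refine Or.inr ⟨c, ?_, rfl⟩
        simp only [Finset.mem_erase, Finset.mem_univ, and_true]
        exact ⟨h2, h1⟩
  have hmemS : ∀ v, v ∈ S ↔
      v = x ∨ v = e z - e w ∨ ∃ c : Fin n, c ≠ z ∧ c ≠ w ∧ v = e z + e c := by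
    intro v
    rw [← hSx, Finset.mem_insert, hmemF0 v]
  have hxΔp := hSsub hxS
  rw [hΔp] at hxΔp
  obtain ⟨i, j, hij, rfl⟩ : ∃ i j : Fin n, i < j ∧ x = e i + e j := by
    rcases hxΔp with ⟨i, j, hij, hE⟩ | h
    · exfalso
      rw [hE] at hxS
      obtain rfl : i = z := keyA i j hij hxS
      obtain rfl : j = w := keyB z j hij hxS
      rw [hE] at hxF0
      exact hxF0 ((hmemF0 _).2 (Or.inl rfl))
    · exact h
  by_cases hjw : j = w
  · -- second alternative
    subst hjw
    have hiz : i = z := by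
      by_contra hiz
      have hroot : (e z - e w) + (e i + e w) = e z + e i := by ring
      have hmem : (e z - e w) + (e i + e w) ∈ Δ := by
        rw [hroot]; exact hsubΔ (hmem_sum (fun h => hiz h.symm))
      exact habel _ hαS _ hxS hmem
    subst hiz
    refine Or.inr (Or.inl ?_)
    rw [← hSx]
    ext v
    simp only [Finset.coe_insert, Set.mem_insert_iff, Finset.mem_coe, Set.mem_union,
      Set.mem_singleton_iff, Set.mem_setOf_eq]
    constructor
    · rintro (rfl | hv)
      · exact Or.inr ⟨w, by omega, rfl⟩
      · rcases (hmemF0 v).1 hv with rfl | ⟨c, h1, h2, rfl⟩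
        · exact Or.inl rfl
        · exact Or.inr ⟨c, (hvz c).1 h1, rfl⟩
    · rintro (rfl | ⟨jj, hj1, rfl⟩)
      · exact Or.inr ((hmemF0 _).2 (Or.inl rfl))
      · by_cases hjjw : jj = w
        · subst hjjw; exact Or.inl rfl
        · exact Or.inr ((hmemF0 _).2 (Or.inr ⟨jj, (hvz jj).2 hj1, hjjw, rfl⟩))
  · -- third alternative
    have hiz : i ≠ z := by
      intro h
      subst h
      exact hxF0 ((hmemF0 _).2 (Or.inr ⟨j, Ne.symm (ne_of_lt hij), hjw, rfl⟩))
    have hij' : (i:ℕ) < (j:ℕ) := Fin.lt_def.mp hij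
    have hi0 : 1 ≤ (i:ℕ) := (hvz i).1 hiz
    have hi1 : (i:ℕ) = 1 := by
      by_contra h1
      have h2n : (1:ℕ) < n := by omega
      set c : Fin n := ⟨1, h2n⟩ with hcdef
      have hcval : (c:ℕ) = 1 := rfl
      have hci : c < i := by rw [Fin.lt_def]; omega
      have hcj : c < j := lt_trans hci hij
      have hnew : e c + e j ∈ S :=
        step _ hxS (e c - e i) (hmem_diff hci) _ (hmem_sum (ne_of_lt hcj)) (by ring)
      rcases (hmemS _).1 hnew with hE | hE | ⟨d, hdz, hdw, hE⟩
      · rcases s16_Lss he (ne_of_lt hcj) (ne_of_lt hij) hE with h | h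
        · exact (ne_of_lt hci) h.1
        · exact (ne_of_lt hcj) h.1
      · exact s16_Lds he (ne_of_lt hzw) hE.symm
      · rcases s16_Lss he (ne_of_lt hcj) (Ne.symm hdz) hE with h | h
        · have := congrArg Fin.val h.1
          omega
        · have := congrArg Fin.val h.2
          omega
    have hj2 : (j:ℕ) = 2 := by
      by_contra h2
      have h3n : (2:ℕ) < n := by omega
      set c : Fin n := ⟨2, h3n⟩ with hcdef
      have hcval : (c:ℕ) = 2 := rfl
      have hcj : c < j := by rw [Fin.lt_def]; omega
      have hic : i < c := by rw [Fin.lt_def]; omega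
      have hnew : e i + e c ∈ S :=
        step _ hxS (e c - e j) (hmem_diff hcj) _ (hmem_sum (ne_of_lt hic)) (by ring)
      rcases (hmemS _).1 hnew with hE | hE | ⟨d, hdz, hdw, hE⟩
      · rcases s16_Lss he (ne_of_lt hic) (ne_of_lt hij) hE with h | h
        · exact (ne_of_lt hcj) h.2
        · exact (ne_of_lt hic) h.2.symm
      · exact s16_Lds he (ne_of_lt hzw) hE.symm
      · rcases s16_Lss he (ne_of_lt hic) (Ne.symm hdz) hE with h | h
        · exact hiz h.1
        · have := congrArg Fin.val h.2
          omega
    have h1n : (1:ℕ) < n := lt_of_lt_of_le (by norm_num) hn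
    have h2n' : (2:ℕ) < n := lt_of_lt_of_le (by norm_num) hn
    obtain rfl : i = ⟨1, h1n⟩ := Fin.ext hi1
    obtain rfl : j = ⟨2, h2n'⟩ := Fin.ext hj2
    refine Or.inr (Or.inr ?_)
    ext v
    simp only [Finset.mem_coe, hmemS v, Set.mem_union, Set.mem_insert_iff,
      Set.mem_singleton_iff, Set.mem_setOf_eq]
    constructor
    · rintro (rfl | rfl | ⟨c, h1, h2, rfl⟩)
      · exact Or.inl (Or.inl rfl)
      · exact Or.inl (Or.inr rfl)
      · exact Or.inr ⟨c, (hvz c).1 h1, (hvw c).1 h2, rfl⟩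
    · rintro ((rfl | rfl) | ⟨jj, hj1, hj2', rfl⟩)
      · exact Or.inl rfl
      · exact Or.inr (Or.inl rfl)
      · exact Or.inr (Or.inr ⟨jj, (hvz jj).2 hj1, (hvw jj).2 hj2', rfl⟩)
end

section
/- Let n ≥ 2 and let ε₁,…,εₙ be the standard basis of ℤⁿ. Let Δ⁺ = {ε_i : 1 ≤ i ≤ n} ∪ {ε_i − ε_j : i < j} ∪ {ε_i + ε_j : i < j} (the positive roots of type Bₙ) and Δ = Δ⁺ ∪ (−Δ⁺). Suppose S ⊆ {ε_i + ε_j : 1 ≤ i < j ≤ n} is a set such that for all α ∈ S and β ∈ Δ⁺ with α + β ∈ Δ one has α + β ∈ S. Call α ∈ S a source if there exist no β ∈ S and γ ∈ Δ⁺ with α = β + γ. Then, for α = ε_i + ε_j ∈ S (i < j), α is a source if and only if neither ε_{i+1} + ε_j nor ε_i + ε_{j+1} belongs to S (where ε_i + ε_{j+1} is understood not to belong to S when j = n). -/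
/-- Characterization of sources (Proposition `prop:source`, type `Bₙ`): for a set `S`
of roots of the form `ε_i + ε_j` (`i < j`) closed under addition of positive roots,
a root `ε_i + ε_j ∈ S` is a source (i.e. not of the form `β + γ` with `β ∈ S`,
`γ ∈ Δ⁺`) if and only if neither `ε_{i+1} + ε_j` nor `ε_i + ε_{j+1}` belongs to `S`. -/
theorem stmt_17 (n : ℕ) (hn : 2 ≤ n)
    (e : Fin n → (Fin n → ℤ)) (he : ∀ i, e i = Pi.single i 1)
    (Δp : Set (Fin n → ℤ))
    (hΔp : Δp = {v | ∃ i : Fin n, v = e i}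
        ∪ {v | ∃ i j : Fin n, i < j ∧ v = e i - e j}
        ∪ {v | ∃ i j : Fin n, i < j ∧ v = e i + e j})
    (Δ : Set (Fin n → ℤ)) (hΔ : Δ = Δp ∪ {v | -v ∈ Δp})
    (S : Set (Fin n → ℤ))
    (hSsub : S ⊆ {v | ∃ i j : Fin n, i < j ∧ v = e i + e j})
    (hideal : ∀ α ∈ S, ∀ β ∈ Δp, α + β ∈ Δ → α + β ∈ S) :
    ∀ i j : Fin n, i < j → e i + e j ∈ S →
      ((¬ ∃ β ∈ S, ∃ γ ∈ Δp, e i + e j = β + γ) ↔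
        ((∀ i' : Fin n, (i' : ℕ) = (i : ℕ) + 1 → e i' + e j ∉ S)
          ∧ (∀ j' : Fin n, (j' : ℕ) = (j : ℕ) + 1 → e i + e j' ∉ S))) := by
  have mem_sub : ∀ x y : Fin n, x < y → e x - e y ∈ Δp := by
    intro x y h
    rw [hΔp]
    exact Set.mem_union_left _ (Set.mem_union_right _ ⟨x, y, h, rfl⟩)
  have mem_plus : ∀ x y : Fin n, x ≠ y → e x + e y ∈ Δp := by
    intro x y h
    rw [hΔp]
    rcases lt_or_gt_of_ne h with h' | h'
    · exact Set.mem_union_right _ ⟨x, y, h', rfl⟩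
    · exact Set.mem_union_right _ ⟨y, x, h', by rw [add_comm]⟩
  have memΔ : ∀ v ∈ Δp, v ∈ Δ := by
    intro v hv; rw [hΔ]; exact Set.mem_union_left _ hv
  -- monotonicity: indices can be decreased within S
  have mono : ∀ a b : Fin n, a < b → e a + e b ∈ S →
      ∀ c d : Fin n, c < d → c ≤ a → d ≤ b → e c + e d ∈ S := by
    have stepL : ∀ a b c : Fin n, c < a → c ≠ b → e a + e b ∈ S → e c + e b ∈ S := by
      intro a b c hca hcb h
      have h3 : e a + e b + (e c - e a) = e c + e b := by ring
      have h2 : e a + e b + (e c - e a) ∈ S := by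
        apply hideal _ h _ (mem_sub c a hca)
        apply memΔ
        rw [h3]; exact mem_plus c b hcb
      rwa [h3] at h2
    have stepR : ∀ a b c : Fin n, c < b → c ≠ a → e a + e b ∈ S → e a + e c ∈ S := by
      intro a b c hcb hca h
      have h3 : e a + e b + (e c - e b) = e a + e c := by ring
      have h2 : e a + e b + (e c - e b) ∈ S := by
        apply hideal _ h _ (mem_sub c b hcb)
        apply memΔ
        rw [h3]; exact mem_plus a c (Ne.symm hca)
      rwa [h3] at h2
    intro a b hab h c d hcd hca hdb
    rcases eq_or_lt_of_le hdb with rfl | hdb'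
    · rcases eq_or_lt_of_le hca with rfl | hca'
      · exact h
      · exact stepL a d c hca' hcd.ne h
    · rcases eq_or_ne d a with rfl | hda
      · have := stepR d b c (hcd.trans hab) hcd.ne h
        rwa [add_comm] at this
      · have h1 := stepR a b d hdb' hda h
        rcases eq_or_lt_of_le hca with rfl | hca'
        · exact h1
        · exact stepL a d c hca' hcd.ne h1
  intro i j hij hmemS
  have hij' : (i : ℕ) < j := hij
  have hjn := j.isLt
  constructor
  · -- easy direction
    intro hns
    constructor
    · intro i' hi' hS'
      exact hns ⟨e i' + e j, hS', e i - e i',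
        mem_sub i i' (by show (i : ℕ) < (i' : ℕ); omega), by ring⟩
    · intro j' hj' hS'
      exact hns ⟨e i + e j', hS', e j - e j',
        mem_sub j j' (by show (j : ℕ) < (j' : ℕ); omega), by ring⟩
  · -- hard direction
    rintro ⟨h1, h2⟩ ⟨β, hβS, γ, hγ, heq⟩
    obtain ⟨a, b, hab, rfl⟩ := hSsub hβS
    have hab' : (a : ℕ) < b := hab
    have hbn := b.isLt
    rw [hΔp] at hγ
    simp only [Set.mem_union, Set.mem_setOf_eq] at hγ
    rcases hγ with (⟨c, rfl⟩ | ⟨c, d, hcd, rfl⟩) | ⟨c, d, hcd, rfl⟩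
    · -- γ = e c : impossible, coordinate sums 2 ≠ 3
      have := congrArg (fun v => ∑ x, v x) heq
      simp [he, Finset.sum_add_distrib, Finset.sum_pi_single'] at this
    · -- γ = e c - e d : main case
      have hcd' : (c : ℕ) < d := hcd
      have key : ∀ x : Fin n,
          (if (x:ℕ) = (i:ℕ) then (1:ℤ) else 0) + (if (x:ℕ) = (j:ℕ) then 1 else 0) =
            (if (x:ℕ) = (a:ℕ) then 1 else 0) + (if (x:ℕ) = (b:ℕ) then 1 else 0)
              + ((if (x:ℕ) = (c:ℕ) then 1 else 0) - (if (x:ℕ) = (d:ℕ) then 1 else 0)) := by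
        intro x
        have h := congrFun heq x
        simpa only [he, Pi.add_apply, Pi.sub_apply, Pi.single_apply, Fin.ext_iff] using h
      have hdi : (d : ℕ) ≠ i := by have h := key i; split_ifs at h <;> omega
      have hdj : (d : ℕ) ≠ j := by have h := key j; split_ifs at h <;> omega
      have hc2 : (c : ℕ) = i ∨ (c : ℕ) = j := by
        have h := key c; split_ifs at h <;> omega
      have hd2 : (d : ℕ) = a ∨ (d : ℕ) = b := by
        have h := key d; split_ifs at h <;> omega
      rcases hc2 with hci | hcj
      · -- c = i
        have hj2 : (j : ℕ) = a ∨ (j : ℕ) = b := by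
          have h := key j; split_ifs at h <;> omega
        rcases hj2 with hja | hjb
        · -- a = j, so d = b and j < d : contradict h2
          have hdb : (d : ℕ) = b := by omega
          have hj1n : (j : ℕ) + 1 < n := by omega
          exact h2 ⟨(j:ℕ)+1, hj1n⟩ rfl
            (mono a b hab hβS i ⟨(j:ℕ)+1, hj1n⟩
              (by show (i:ℕ) < (j:ℕ)+1; omega)
              (by show (i:ℕ) ≤ (a:ℕ); omega)
              (by show (j:ℕ)+1 ≤ (b:ℕ); omega))
        · -- b = j, so d = a and i < d < j : contradict h1
          have hda : (d : ℕ) = a := by omega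
          have hi1n : (i : ℕ) + 1 < n := by omega
          exact h1 ⟨(i:ℕ)+1, hi1n⟩ rfl
            (mono a b hab hβS ⟨(i:ℕ)+1, hi1n⟩ j
              (by show (i:ℕ)+1 < (j:ℕ); omega)
              (by show (i:ℕ)+1 ≤ (a:ℕ); omega)
              (by show (j:ℕ) ≤ (b:ℕ); omega))
      · -- c = j, so a = i, b = d, j < d : contradict h2
        have hi2 : (i : ℕ) = a ∨ (i : ℕ) = b := by
          have h := key i; split_ifs at h <;> omega
        have hia : (i : ℕ) = a := by omega
        have hdb : (d : ℕ) = b := by omega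
        have hj1n : (j : ℕ) + 1 < n := by omega
        exact h2 ⟨(j:ℕ)+1, hj1n⟩ rfl
          (mono a b hab hβS i ⟨(j:ℕ)+1, hj1n⟩
            (by show (i:ℕ) < (j:ℕ)+1; omega)
            (by show (i:ℕ) ≤ (a:ℕ); omega)
            (by show (j:ℕ)+1 ≤ (b:ℕ); omega))
    · -- γ = e c + e d : impossible, coordinate sums 2 ≠ 4
      have := congrArg (fun v => ∑ x, v x) heq
      simp [he, Finset.sum_add_distrib, Finset.sum_pi_single'] at this
end

section
/- Let n ≥ 1 be odd. In M_{2n}(ℂ), let Λ = Σ_{i=1}^{n} E_{i,i+1} − Σ_{i=n+1}^{2n−1} E_{i,i+1}, let S be the block matrix [[0, −(1/2)·Iₙ],[0,0]] (with n×n blocks, upper-right block −(1/2) times the identity), and let Λ_A = Σ_{i=1}^{n−1} E_{i,i+1} ∈ Mₙ(ℂ). Then for every k with 1 ≤ k ≤ n, the commutator [S, Λ^{2k−1}] = S·Λ^{2k−1} − Λ^{2k−1}·S equals the block matrix [[0, Λ_A^{2k−1}],[0,0]], i.e. the 2n×2n matrix with upper-right n×n block Λ_A^{2k−1} and all other blocks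 zero. -/
/-- Appendix C computation (type `C`, `n` odd): with `Λ` the regular nilpotent element
of `sp(2n, ℂ)`, `S = [[0, −½Iₙ],[0,0]]`, and `Λ_A` the `n×n` regular nilpotent Jordan
block, the commutator `[S, Λ^{2k−1}]` is the block matrix `[[0, Λ_A^{2k−1}],[0,0]]`
for every `1 ≤ k ≤ n`. -/
theorem stmt_19 (n : ℕ) (hn : 1 ≤ n) (hodd : Odd n)
    (Λ S : Matrix (Fin (2*n)) (Fin (2*n)) ℂ)
    (hΛ : ∀ i j : Fin (2*n),
      Λ i j = if (j : ℕ) = (i : ℕ) + 1 then (if (i : ℕ) < n then 1 else -1) else 0)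
    (hS : ∀ i j : Fin (2*n),
      S i j = if (i : ℕ) < n ∧ (j : ℕ) = (i : ℕ) + n then -(1/2 : ℂ) else 0)
    (ΛA : Matrix (Fin n) (Fin n) ℂ)
    (hΛA : ∀ i j : Fin n, ΛA i j = if (j : ℕ) = (i : ℕ) + 1 then 1 else 0) :
    ∀ k, 1 ≤ k → k ≤ n →
      S * Λ ^ (2*k - 1) - Λ ^ (2*k - 1) * S =
        Matrix.of fun i j : Fin (2*n) =>
          if h : (i : ℕ) < n ∧ n ≤ (j : ℕ) then
            (ΛA ^ (2*k - 1)) ⟨(i : ℕ), h.1⟩ ⟨(j : ℕ) - n, by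
              have hj := j.isLt; omega⟩
          else 0 := by
  -- entrywise formula for powers of Λ
  have hpowΛ : ∀ m : ℕ, ∀ i j : Fin (2*n),
      (Λ ^ m) i j = if (j : ℕ) = (i : ℕ) + m then
        (-1 : ℂ) ^ ((i : ℕ) + m - max (i : ℕ) n) else 0 := by
    intro m
    induction m with
    | zero =>
      intro i j
      have h0 : (i : ℕ) + 0 - max (i : ℕ) n = 0 := by omega
      by_cases h : (j : ℕ) = (i : ℕ)
      · have : i = j := Fin.ext h.symm
        simp [this, Matrix.one_apply, h0]
      · have : i ≠ j := fun hh => h (by rw [hh])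
        simp [Matrix.one_apply_ne this, h, h0]
    | succ m ih =>
      intro i j
      rw [pow_succ, Matrix.mul_apply]
      by_cases hlt : (i : ℕ) + m < 2*n
      · rw [Finset.sum_eq_single (⟨(i : ℕ) + m, hlt⟩ : Fin (2*n))]
        · rw [ih, hΛ]
          simp only [Fin.val_mk]
          rw [if_pos trivial]
          by_cases hj : (j : ℕ) = (i : ℕ) + (m + 1)
          · rw [if_pos (by omega : (j : ℕ) = (i : ℕ) + m + 1), if_pos hj]
            by_cases hin : (i : ℕ) + m < n
            · have e1 : (i : ℕ) + m - max (i : ℕ) n = 0 := by omega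
              have e2 : (i : ℕ) + (m + 1) - max (i : ℕ) n = 0 := by omega
              rw [if_pos hin, e1, e2]
              norm_num
            · have e2 : (i : ℕ) + (m + 1) - max (i : ℕ) n
                  = ((i : ℕ) + m - max (i : ℕ) n) + 1 := by omega
              rw [if_neg hin, e2, pow_succ]
          · rw [if_neg (by omega : ¬ ((j : ℕ) = (i : ℕ) + m + 1)), if_neg hj]
            ring
        · intro b _ hb
          have hb' : (b : ℕ) ≠ (i : ℕ) + m := fun hh => hb (Fin.ext hh)
          rw [ih, if_neg (by omega : ¬ ((b : ℕ) = (i : ℕ) + m)), zero_mul]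
        · simp
      · rw [if_neg (by have := j.isLt; omega : ¬ ((j : ℕ) = (i : ℕ) + (m + 1)))]
        apply Finset.sum_eq_zero
        intro x _
        rw [ih, if_neg (by have := x.isLt; omega : ¬ ((x : ℕ) = (i : ℕ) + m)), zero_mul]
  -- entrywise formula for powers of ΛA
  have hpowΛA : ∀ m : ℕ, ∀ i j : Fin n,
      (ΛA ^ m) i j = if (j : ℕ) = (i : ℕ) + m then 1 else 0 := by
    intro m
    induction m with
    | zero =>
      intro i j
      by_cases h : (j : ℕ) = (i : ℕ)
      · have : i = j := Fin.ext h.symm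
        simp [this, Matrix.one_apply]
      · have : i ≠ j := fun hh => h (by rw [hh])
        simp [Matrix.one_apply_ne this, h]
    | succ m ih =>
      intro i j
      rw [pow_succ, Matrix.mul_apply]
      by_cases hlt : (i : ℕ) + m < n
      · rw [Finset.sum_eq_single (⟨(i : ℕ) + m, hlt⟩ : Fin n)]
        · rw [ih, hΛA]
          simp only [Fin.val_mk]
          rw [if_pos trivial]
          by_cases hj : (j : ℕ) = (i : ℕ) + (m + 1)
          · rw [if_pos (by omega : (j : ℕ) = (i : ℕ) + m + 1), if_pos hj]
            norm_num
          · rw [if_neg (by omega : ¬ ((j : ℕ) = (i : ℕ) + m + 1)), if_neg hj]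
            ring
        · intro b _ hb
          have hb' : (b : ℕ) ≠ (i : ℕ) + m := fun hh => hb (Fin.ext hh)
          rw [ih, if_neg (by omega : ¬ ((b : ℕ) = (i : ℕ) + m)), zero_mul]
        · simp
      · rw [if_neg (by have := j.isLt; omega : ¬ ((j : ℕ) = (i : ℕ) + (m + 1)))]
        apply Finset.sum_eq_zero
        intro x _
        rw [ih, if_neg (by have := x.isLt; omega : ¬ ((x : ℕ) = (i : ℕ) + m)), zero_mul]
  intro k hk1 hkn
  set m : ℕ := 2 * k - 1 with hmdef
  have hmodd : Odd m := ⟨k - 1, by omega⟩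
  have hneg : (-1 : ℂ) ^ m = -1 := hmodd.neg_one_pow
  ext i j
  have hi2 : (i : ℕ) < 2 * n := i.isLt
  have hj2 : (j : ℕ) < 2 * n := j.isLt
  rw [Matrix.sub_apply, Matrix.mul_apply, Matrix.mul_apply, Matrix.of_apply]
  have hA : (∑ l, S i l * (Λ ^ m) l j)
      = if (i : ℕ) < n ∧ (j : ℕ) = (i : ℕ) + n + m then (1/2 : ℂ) else 0 := by
    by_cases hi : (i : ℕ) < n
    · have hin : (i : ℕ) + n < 2 * n := by omega
      rw [Finset.sum_eq_single (⟨(i : ℕ) + n, hin⟩ : Fin (2*n))]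
      · rw [hS, hpowΛ]
        simp only [Fin.val_mk]
        rw [if_pos ⟨hi, trivial⟩]
        by_cases hj : (j : ℕ) = (i : ℕ) + n + m
        · have hmax : (i : ℕ) + n + m - max ((i : ℕ) + n) n = m := by omega
          rw [if_pos hj, if_pos ⟨hi, hj⟩, hmax, hneg]
          norm_num
        · rw [if_neg hj, if_neg (fun h => hj h.2), mul_zero]
      · intro b _ hb
        have hb' : (b : ℕ) ≠ (i : ℕ) + n := fun hh => hb (Fin.ext hh)
        rw [hS, if_neg (by omega : ¬ ((i : ℕ) < n ∧ (b : ℕ) = (i : ℕ) + n)), zero_mul]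
      · simp
    · rw [if_neg (by omega : ¬ ((i : ℕ) < n ∧ (j : ℕ) = (i : ℕ) + n + m))]
      apply Finset.sum_eq_zero
      intro x _
      rw [hS, if_neg (by omega : ¬ ((i : ℕ) < n ∧ (x : ℕ) = (i : ℕ) + n)), zero_mul]
  have hB : (∑ l, (Λ ^ m) i l * S l j)
      = if (i : ℕ) + m < n ∧ (j : ℕ) = (i : ℕ) + m + n then (-(1/2) : ℂ) else 0 := by
    by_cases hc : (i : ℕ) + m < n ∧ (j : ℕ) = (i : ℕ) + m + n
    · have him : (i : ℕ) + m < 2 * n := by omega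
      rw [Finset.sum_eq_single (⟨(i : ℕ) + m, him⟩ : Fin (2*n))]
      · rw [hpowΛ, hS]
        simp only [Fin.val_mk]
        have e1 : (i : ℕ) + m - max (i : ℕ) n = 0 := by omega
        rw [if_pos trivial, if_pos hc, e1]
        norm_num
      · intro b _ hb
        have hb' : (b : ℕ) ≠ (i : ℕ) + m := fun hh => hb (Fin.ext hh)
        rw [hpowΛ, if_neg (by omega : ¬ ((b : ℕ) = (i : ℕ) + m)), zero_mul]
      · simp
    · rw [if_neg hc]
      apply Finset.sum_eq_zero
      intro x _
      rw [hpowΛ, hS]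
      by_cases h1 : (x : ℕ) = (i : ℕ) + m
      · rw [if_pos h1, if_neg (by omega : ¬ ((x : ℕ) < n ∧ (j : ℕ) = (x : ℕ) + n)), mul_zero]
      · rw [if_neg h1, zero_mul]
  rw [hA, hB]
  by_cases hmain : (i : ℕ) < n ∧ (j : ℕ) = (i : ℕ) + n + m
  · have him : (i : ℕ) + m < n := by omega
    rw [if_pos hmain, if_pos ⟨him, by omega⟩,
      dif_pos (⟨hmain.1, by omega⟩ : (i : ℕ) < n ∧ n ≤ (j : ℕ)), hpowΛA]
    simp only [Fin.val_mk]
    rw [if_pos (by omega : (j : ℕ) - n = (i : ℕ) + m)]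
    norm_num
  · rw [if_neg hmain, if_neg (by omega : ¬ ((i : ℕ) + m < n ∧ (j : ℕ) = (i : ℕ) + m + n))]
    by_cases hR : (i : ℕ) < n ∧ n ≤ (j : ℕ)
    · rw [dif_pos hR, hpowΛA]
      simp only [Fin.val_mk]
      rw [if_neg (by omega : ¬ ((j : ℕ) - n = (i : ℕ) + m))]
      norm_num
    · rw [dif_neg hR]
      norm_num
end
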